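/- arXiv:1412.8481 — 6 statements merged into one kernel-verified Lean document; each statement's English description precedes it below -/
import Mathlib

section
/- Let p ∈ (0, ∞) and let (Ω, μ) be a measure space. If D = [x_j(m_j); y_i(n_i)]_{s,t} is a signed simplex in L_p(Ω, μ) such that the essential range of each of the functions x_j, y_i is a subset of {0,1}, then γ_p(D) = ‖Σ_j m_j x_j − Σ_i n_i y_i‖_2², where ‖·‖_2 denotes the L_2(Ω, μ)-norm. In particular, γ_p(D) = 0 if and only if the simplex D is balanced. -/
open MeasureTheory ENNReal Filter
open scoped Classical

/-- A set `B` in `X`, equipped with the distance function `d`, has `p`-negative type: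
for all finite collections of distinct points of `B` and real weights summing to zero,
`∑_{j,i} d(z_j, z_i)^p ζ_j ζ_i ≤ 0`. -/
def HasNegativeType {X : Type*} (d : X → X → ℝ) (p : ℝ) (B : Set X) : Prop :=
  ∀ n : ℕ, 2 ≤ n → ∀ z : Fin n → X, Function.Injective z → (∀ k, z k ∈ B) →
    ∀ ζ : Fin n → ℝ, ∑ k, ζ k = 0 →
      ∑ j, ∑ i, d (z j) (z i) ^ p * (ζ j * ζ i) ≤ 0

/-- Strict `p`-negative type: `p`-negative type, with strict inequality whenever the
weight tuple `ζ` is nonzero. -/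
def HasStrictNegativeType {X : Type*} (d : X → X → ℝ) (p : ℝ) (B : Set X) : Prop :=
  HasNegativeType d p B ∧
    ∀ n : ℕ, 2 ≤ n → ∀ z : Fin n → X, Function.Injective z → (∀ k, z k ∈ B) →
      ∀ ζ : Fin n → ℝ, ∑ k, ζ k = 0 → ζ ≠ 0 →
        ∑ j, ∑ i, d (z j) (z i) ^ p * (ζ j * ζ i) < 0

/-- The `p`-simplex gap `γ_p(D)` of a signed `(s,t)`-simplex
`D = [x_j(m_j); y_i(n_i)]_{s,t}` with respect to the distance function `d`. -/
noncomputable def simplexGap {X : Type*} (d : X → X → ℝ) (p : ℝ) {s t : ℕ}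
    (x : Fin s → X) (y : Fin t → X) (m : Fin s → ℝ) (n : Fin t → ℝ) : ℝ :=
  (∑ j, ∑ i, m j * n i * d (x j) (y i) ^ p)
    - (∑ j₁, ∑ j₂, if j₁ < j₂ then m j₁ * m j₂ * d (x j₁) (x j₂) ^ p else 0)
    - (∑ i₁, ∑ i₂, if i₁ < i₂ then n i₁ * n i₂ * d (y i₁) (y i₂) ^ p else 0)

/-- A signed simplex is degenerate if for every point `z`, the repeating numbers
`m(z) = ∑_{j : x_j = z} m_j` and `n(z) = ∑_{i : y_i = z} n_i` coincide. -/
def SimplexDegenerate {X : Type*} {s t : ℕ}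
    (x : Fin s → X) (y : Fin t → X) (m : Fin s → ℝ) (n : Fin t → ℝ) : Prop :=
  ∀ z : X, (∑ j, if x j = z then m j else 0) = (∑ i, if y i = z then n i else 0)


/-- The distance on `L_p(Ω, μ)` induced by the `p`-(quasi-)norm:
`d(f, g) = ‖f − g‖_p = (∫ |f − g|^p dμ)^{1/p}`. -/
noncomputable def lpDist {Ω : Type*} [MeasurableSpace Ω] (p : ℝ) (μ : Measure Ω) (f g : Ω →ₘ[μ] ℝ) : ℝ :=
  (eLpNorm (⇑(f - g)) (ENNReal.ofReal p) μ).toReal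

/-- A set of (a.e.-classes of) measurable functions is two-valued if it has more than one
element and the essential range of each member is a subset of `{0, 1}`. -/
def TwoValued {Ω : Type*} [MeasurableSpace Ω] {μ : Measure Ω} (B : Set (Ω →ₘ[μ] ℝ)) : Prop :=
  B.Nontrivial ∧ ∀ f ∈ B, ∀ᵐ ω ∂μ, (f : Ω → ℝ) ω ∈ ({0, 1} : Set ℝ)



lemma halfsum {k : ℕ} (A : Fin k → Fin k → ℝ) (hsym : ∀ a b, A a b = A b a)
    (hdiag : ∀ a, A a a = 0) :
    ∑ j₁, ∑ j₂, (if j₁ < j₂ then A j₁ j₂ else 0) = (∑ j₁, ∑ j₂, A j₁ j₂) / 2 := by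
  have key : ∀ a b : Fin k, A a b =
      (if a < b then A a b else 0) + (if b < a then A a b else 0) := by
    intro a b
    rcases lt_trichotomy a b with h | h | h
    · simp [h, not_lt.2 h.le]
    · subst h; simp [hdiag]
    · simp [h, not_lt.2 h.le]
  have swap : ∑ j₁, ∑ j₂, (if j₂ < j₁ then A j₁ j₂ else 0)
      = ∑ j₁, ∑ j₂, (if j₁ < j₂ then A j₁ j₂ else 0) := by
    rw [Finset.sum_comm]
    exact Finset.sum_congr rfl fun a _ => Finset.sum_congr rfl fun b _ => by rw [hsym]
  have expand : (∑ j₁, ∑ j₂, A j₁ j₂)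
      = ∑ j₁, ∑ j₂, ((if j₁ < j₂ then A j₁ j₂ else 0) + (if j₂ < j₁ then A j₁ j₂ else 0)) :=
    Finset.sum_congr rfl fun a _ => Finset.sum_congr rfl fun b _ => key a b
  rw [expand]
  simp only [Finset.sum_add_distrib, swap]
  ring

lemma sum_expand {k l : ℕ} (a : Fin k → ℝ) (b : Fin l → ℝ) (u : Fin k → ℝ) (v : Fin l → ℝ)
    (w : Fin k → Fin l → ℝ) :
    ∑ j, ∑ i, a j * b i * (u j + v i - 2 * w j i)
      = (∑ j, a j * u j) * (∑ i, b i) + (∑ j, a j) * (∑ i, b i * v i)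
        - 2 * ∑ j, ∑ i, a j * b i * w j i := by
  have : ∑ j, ∑ i, a j * b i * (u j + v i - 2 * w j i)
      = ∑ j, ∑ i, (a j * u j * b i + a j * (b i * v i) - 2 * (a j * b i * w j i)) :=
    Finset.sum_congr rfl fun j _ => Finset.sum_congr rfl fun i _ => by ring
  rw [this]
  simp only [Finset.sum_sub_distrib, Finset.sum_add_distrib, ← Finset.sum_mul,
    ← Finset.mul_sum]


lemma gap_algebra {s t : ℕ} (m : Fin s → ℝ) (n : Fin t → ℝ)
    (Jx : Fin s → Fin s → ℝ) (Jy : Fin t → Fin t → ℝ) (Jxy : Fin s → Fin t → ℝ)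
    (hJx : ∀ a b, Jx a b = Jx b a) (hJy : ∀ a b, Jy a b = Jy b a)
    (hbal : ∑ j, m j = ∑ i, n i) :
    (∑ j, ∑ i, m j * n i * (Jx j j + Jy i i - 2 * Jxy j i))
      - (∑ j₁, ∑ j₂, if j₁ < j₂ then m j₁ * m j₂ * (Jx j₁ j₁ + Jx j₂ j₂ - 2 * Jx j₁ j₂) else 0)
      - (∑ i₁, ∑ i₂, if i₁ < i₂ then n i₁ * n i₂ * (Jy i₁ i₁ + Jy i₂ i₂ - 2 * Jy i₁ i₂) else 0)
    = (∑ j, ∑ j', m j * m j' * Jx j j') - 2 * (∑ j, ∑ i, m j * n i * Jxy j i)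
        + (∑ i, ∑ i', n i * n i' * Jy i i') := by
  rw [halfsum _ (fun a b => by rw [hJx a b]; ring) (fun a => by ring),
      halfsum _ (fun a b => by rw [hJy a b]; ring) (fun a => by ring),
      sum_expand, sum_expand m m (fun j => Jx j j) (fun j => Jx j j) Jx,
      sum_expand n n (fun i => Jy i i) (fun i => Jy i i) Jy]
  linear_combination hbal * ((∑ i, n i * Jy i i) - (∑ j, m j * Jx j j))


lemma coeFn_finsum {Ω : Type*} [MeasurableSpace Ω] {μ : Measure Ω} {ι : Type*} (s : Finset ι)
    (f : ι → Ω →ₘ[μ] ℝ) :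
    ⇑(∑ i ∈ s, f i) =ᶠ[ae μ] fun ω => ∑ i ∈ s, (f i : Ω → ℝ) ω := by
  classical
  induction s using Finset.induction with
  | empty => simp only [Finset.sum_empty]; exact MeasureTheory.AEEqFun.coeFn_zero
  | @insert a s hnot ih =>
    rw [Finset.sum_insert hnot]
    filter_upwards [MeasureTheory.AEEqFun.coeFn_add (f a) (∑ i ∈ s, f i), ih] with ω h1 h2
    rw [h1, Pi.add_apply, h2, Finset.sum_insert hnot]

section MeasAux
variable {Ω : Type*} [MeasurableSpace Ω] {μ : Measure Ω} {p : ℝ}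

lemma lint_lt_top (hp : 0 < p) {f : Ω → ℝ} (hf : MemLp f (ENNReal.ofReal p) μ) :
    ∫⁻ ω, (‖f ω‖₊ : ℝ≥0∞) ^ p ∂μ < ⊤ := by
  have hp0 : ENNReal.ofReal p ≠ 0 := by
    simp [ENNReal.ofReal_eq_zero, not_le, hp]
  have h := hf.2
  rw [eLpNorm_eq_lintegral_rpow_enorm_toReal hp0 ENNReal.ofReal_ne_top,
    ENNReal.toReal_ofReal hp.le] at h
  have h2 := ENNReal.rpow_lt_top_of_nonneg hp.le h.ne
  rwa [← ENNReal.rpow_mul, one_div_mul_cancel hp.ne', ENNReal.rpow_one] at h2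

lemma nnnorm_rpow_ae (hp : 0 < p) {f : Ω → ℝ} (h01 : ∀ᵐ ω ∂μ, f ω ∈ ({0, 1} : Set ℝ)) :
    ∀ q : ℝ, 0 < q → ∀ᵐ ω ∂μ, (‖f ω‖₊ : ℝ≥0∞) ^ q = (‖f ω‖₊ : ℝ≥0∞) ^ p := by
  intro q hq
  filter_upwards [h01] with ω hω
  rcases hω with h | h <;> rw [h] <;>
    simp [ENNReal.zero_rpow_of_pos hq, ENNReal.zero_rpow_of_pos hp]

lemma integrable01 (hp : 0 < p) {f : Ω → ℝ} (hf : MemLp f (ENNReal.ofReal p) μ)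
    (h01 : ∀ᵐ ω ∂μ, f ω ∈ ({0, 1} : Set ℝ)) : Integrable f μ := by
  rw [← memLp_one_iff_integrable]
  refine ⟨hf.1, ?_⟩
  rw [eLpNorm_one_eq_lintegral_enorm]
  simp only [enorm_eq_nnnorm]
  have : ∫⁻ ω, (‖f ω‖₊ : ℝ≥0∞) ∂μ = ∫⁻ ω, (‖f ω‖₊ : ℝ≥0∞) ^ p ∂μ := by
    refine lintegral_congr_ae ?_
    filter_upwards [nnnorm_rpow_ae hp h01 1 one_pos] with ω hω
    rw [← hω, ENNReal.rpow_one]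
  rw [this]
  exact lint_lt_top hp hf

lemma memL2_01 (hp : 0 < p) {f : Ω → ℝ} (hf : MemLp f (ENNReal.ofReal p) μ)
    (h01 : ∀ᵐ ω ∂μ, f ω ∈ ({0, 1} : Set ℝ)) : MemLp f 2 μ := by
  refine ⟨hf.1, ?_⟩
  rw [eLpNorm_eq_lintegral_rpow_enorm_toReal two_ne_zero ENNReal.ofNat_ne_top]
  simp only [enorm_eq_nnnorm]
  have : ∫⁻ ω, (‖f ω‖₊ : ℝ≥0∞) ^ (2 : ℝ≥0∞).toReal ∂μ = ∫⁻ ω, (‖f ω‖₊ : ℝ≥0∞) ^ p ∂μ := by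
    refine lintegral_congr_ae ?_
    exact nnnorm_rpow_ae hp h01 (2 : ℝ≥0∞).toReal (by simp)
  rw [this]
  exact ENNReal.rpow_lt_top_of_nonneg (by positivity) (lint_lt_top hp hf).ne

lemma integrable_mul01 (hp : 0 < p) {f g : Ω → ℝ}
    (hf : MemLp f (ENNReal.ofReal p) μ)
    (hf01 : ∀ᵐ ω ∂μ, f ω ∈ ({0, 1} : Set ℝ)) (hg01 : ∀ᵐ ω ∂μ, g ω ∈ ({0, 1} : Set ℝ))
    (hgm : AEStronglyMeasurable g μ) :
    Integrable (fun ω => f ω * g ω) μ := by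
  refine Integrable.mono' ((integrable01 hp hf hf01).norm) (hf.1.mul hgm) ?_
  filter_upwards [hg01] with ω hω
  rw [norm_mul]
  have : ‖g ω‖ ≤ 1 := by
    rcases hω with h | h <;> simp_all
  calc ‖f ω‖ * ‖g ω‖ ≤ ‖f ω‖ * 1 := by gcongr
    _ = ‖f ω‖ := mul_one _


lemma lint_sq_eq {G : Ω → ℝ} (hm : AEStronglyMeasurable G μ) :
    ∫ ω, G ω ^ 2 ∂μ = (∫⁻ ω, (‖G ω‖₊ : ℝ≥0∞) ^ (2 : ℝ) ∂μ).toReal := by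
  have hm2 : AEStronglyMeasurable (fun ω => G ω ^ 2) μ := by
    have : (fun ω => G ω ^ 2) = fun ω => G ω * G ω := by ext ω; ring
    rw [this]; exact hm.mul hm
  rw [integral_eq_lintegral_of_nonneg_ae (ae_of_all _ fun ω => sq_nonneg _) hm2]
  congr 1
  refine lintegral_congr fun ω => ?_
  rw [← enorm_eq_nnnorm, Real.enorm_eq_ofReal_abs, ENNReal.ofReal_rpow_of_nonneg (abs_nonneg _) (by norm_num : (0:ℝ) ≤ 2)]
  congr 1
  rw [show ((2:ℝ)) = ((2:ℕ):ℝ) by norm_num, Real.rpow_natCast, sq_abs]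

lemma sq_eLpNorm {G : Ω → ℝ} (hm : AEStronglyMeasurable G μ) :
    (eLpNorm G 2 μ).toReal ^ 2 = ∫ ω, G ω ^ 2 ∂μ := by
  rw [lint_sq_eq hm, eLpNorm_eq_lintegral_rpow_enorm_toReal two_ne_zero ENNReal.ofNat_ne_top]
  have h2 : (2 : ℝ≥0∞).toReal = (2 : ℝ) := by simp
  rw [h2, ← ENNReal.toReal_pow, ← ENNReal.rpow_natCast, ← ENNReal.rpow_mul]
  norm_num
  rfl

lemma dpow (hp : 0 < p) (f g : Ω →ₘ[μ] ℝ)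
    (hf01 : ∀ᵐ ω ∂μ, (f : Ω → ℝ) ω ∈ ({0, 1} : Set ℝ))
    (hg01 : ∀ᵐ ω ∂μ, (g : Ω → ℝ) ω ∈ ({0, 1} : Set ℝ)) :
    lpDist p μ f g ^ p = ∫ ω, ((f : Ω → ℝ) ω - (g : Ω → ℝ) ω) ^ 2 ∂μ := by
  have hp0 : ENNReal.ofReal p ≠ 0 := by simp [ENNReal.ofReal_eq_zero, not_le, hp]
  have hm : AEStronglyMeasurable (fun ω => ((f : Ω → ℝ) ω - (g : Ω → ℝ) ω) ^ 2) μ := by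
    have h := f.aestronglyMeasurable.sub g.aestronglyMeasurable
    have : (fun ω => ((f : Ω → ℝ) ω - (g : Ω → ℝ) ω) ^ 2)
        = fun ω => ((f : Ω → ℝ) ω - (g : Ω → ℝ) ω) * ((f : Ω → ℝ) ω - (g : Ω → ℝ) ω) := by
      ext ω; ring
    rw [this]; exact h.mul h
  have h2 : ∫ ω, ((f : Ω → ℝ) ω - (g : Ω → ℝ) ω) ^ 2 ∂μ
      = (∫⁻ ω, ENNReal.ofReal (((f : Ω → ℝ) ω - (g : Ω → ℝ) ω) ^ 2) ∂μ).toReal :=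
    integral_eq_lintegral_of_nonneg_ae (ae_of_all _ fun ω => sq_nonneg _) hm
  have hae : ∀ᵐ ω ∂μ, (‖(⇑(f - g) : Ω → ℝ) ω‖₊ : ℝ≥0∞) ^ p
      = ENNReal.ofReal (((f : Ω → ℝ) ω - (g : Ω → ℝ) ω) ^ 2) := by
    filter_upwards [AEEqFun.coeFn_sub f g, hf01, hg01] with ω hsub ha hb
    rw [hsub, Pi.sub_apply]
    rcases ha with ha | ha <;> rcases hb with hb | hb <;>
      simp_all [ENNReal.zero_rpow_of_pos hp]
  unfold lpDist
  rw [eLpNorm_eq_lintegral_rpow_enorm_toReal hp0 ENNReal.ofReal_ne_top]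
  simp only [enorm_eq_nnnorm]
  rw [ENNReal.toReal_ofReal hp.le, lintegral_congr_ae hae, ENNReal.toReal_rpow,
    ← ENNReal.rpow_mul, one_div_mul_cancel hp.ne', ENNReal.rpow_one, ← h2]


lemma expand_sq {f g : Ω → ℝ}
    (hff : Integrable (fun ω => f ω * f ω) μ) (hfg : Integrable (fun ω => f ω * g ω) μ)
    (hgg : Integrable (fun ω => g ω * g ω) μ) :
    ∫ ω, (f ω - g ω) ^ 2 ∂μ
      = (∫ ω, f ω * f ω ∂μ) + (∫ ω, g ω * g ω ∂μ) - 2 * ∫ ω, f ω * g ω ∂μ := by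
  have h : (fun ω => (f ω - g ω) ^ 2)
      = fun ω => (f ω * f ω + g ω * g ω) - 2 * (f ω * g ω) := by ext ω; ring
  have h1 : Integrable (fun ω => f ω * f ω + g ω * g ω) μ := hff.add hgg
  have h2 : Integrable (fun ω => 2 * (f ω * g ω)) μ := hfg.const_mul 2
  rw [h, integral_sub h1 h2, integral_add hff hgg, integral_const_mul]

lemma integral_double_sum {k l : ℕ} (c : Fin k → Fin l → ℝ) (h : Fin k → Fin l → Ω → ℝ)
    (hint : ∀ a b, Integrable (h a b) μ) :
    ∫ ω, ∑ a, ∑ b, c a b * h a b ω ∂μ = ∑ a, ∑ b, c a b * ∫ ω, h a b ω ∂μ := by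
  rw [integral_finset_sum _
    (fun a _ => integrable_finset_sum _ fun b _ => (hint a b).const_mul (c a b))]
  refine Finset.sum_congr rfl fun a _ => ?_
  rw [integral_finset_sum _ (fun b _ => (hint a b).const_mul _)]
  exact Finset.sum_congr rfl fun b _ => integral_const_mul _ _

end MeasAux

/-- If `D = [x_j(m_j); y_i(n_i)]_{s,t}` is a signed simplex in
`L_p(Ω, μ)` whose vertices all have essential range contained in `{0,1}`, then
`γ_p(D) = ‖∑_j m_j x_j − ∑_i n_i y_i‖₂²`; in particular `γ_p(D) = 0` iff `D` is balanced. -/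
theorem twoValued_simplexGap_Lp {Ω : Type*} [MeasurableSpace Ω] (μ : Measure Ω)
    (p : ℝ) (hp : 0 < p) (s t : ℕ) (hs : 0 < s) (ht : 0 < t)
    (x : Fin s → (Ω →ₘ[μ] ℝ)) (y : Fin t → (Ω →ₘ[μ] ℝ))
    (m : Fin s → ℝ) (n : Fin t → ℝ) (hbal : ∑ j, m j = ∑ i, n i)
    (hxLp : ∀ j, MemLp (⇑(x j)) (ENNReal.ofReal p) μ)
    (hyLp : ∀ i, MemLp (⇑(y i)) (ENNReal.ofReal p) μ)
    (hx : ∀ j, ∀ᵐ ω ∂μ, (x j : Ω → ℝ) ω ∈ ({0, 1} : Set ℝ))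
    (hy : ∀ i, ∀ᵐ ω ∂μ, (y i : Ω → ℝ) ω ∈ ({0, 1} : Set ℝ)) :
    simplexGap (lpDist p μ) p x y m n =
      (eLpNorm (⇑((∑ j, m j • x j) - ∑ i, n i • y i)) 2 μ).toReal ^ 2 ∧
    (simplexGap (lpDist p μ) p x y m n = 0 ↔ (∑ j, m j • x j) = ∑ i, n i • y i) := by
  classical
  -- integrals of products
  have hIxx : ∀ j j', Integrable (fun ω => (x j : Ω → ℝ) ω * (x j' : Ω → ℝ) ω) μ :=
    fun j j' => integrable_mul01 hp (hxLp j) (hx j) (hx j') (x j').aestronglyMeasurable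
  have hIyy : ∀ i i', Integrable (fun ω => (y i : Ω → ℝ) ω * (y i' : Ω → ℝ) ω) μ :=
    fun i i' => integrable_mul01 hp (hyLp i) (hy i) (hy i') (y i').aestronglyMeasurable
  have hIxy : ∀ j i, Integrable (fun ω => (x j : Ω → ℝ) ω * (y i : Ω → ℝ) ω) μ :=
    fun j i => integrable_mul01 hp (hxLp j) (hx j) (hy i) (y i).aestronglyMeasurable
  set Jx : Fin s → Fin s → ℝ :=
    fun j j' => ∫ ω, (x j : Ω → ℝ) ω * (x j' : Ω → ℝ) ω ∂μ with hJxdef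
  set Jy : Fin t → Fin t → ℝ :=
    fun i i' => ∫ ω, (y i : Ω → ℝ) ω * (y i' : Ω → ℝ) ω ∂μ with hJydef
  set Jxy : Fin s → Fin t → ℝ :=
    fun j i => ∫ ω, (x j : Ω → ℝ) ω * (y i : Ω → ℝ) ω ∂μ with hJxydef
  have hJxs : ∀ a b, Jx a b = Jx b a := by
    intro a b
    simp only [hJxdef]
    congr 1; ext ω; ring
  have hJys : ∀ a b, Jy a b = Jy b a := by
    intro a b
    simp only [hJydef]
    congr 1; ext ω; ring
  have c1 : ∀ j i, lpDist p μ (x j) (y i) ^ p = Jx j j + Jy i i - 2 * Jxy j i := by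
    intro j i
    rw [dpow hp (x j) (y i) (hx j) (hy i), expand_sq (hIxx j j) (hIxy j i) (hIyy i i)]
  have c2 : ∀ j j', lpDist p μ (x j) (x j') ^ p = Jx j j + Jx j' j' - 2 * Jx j j' := by
    intro j j'
    rw [dpow hp (x j) (x j') (hx j) (hx j'), expand_sq (hIxx j j) (hIxx j j') (hIxx j' j')]
  have c3 : ∀ i i', lpDist p μ (y i) (y i') ^ p = Jy i i + Jy i' i' - 2 * Jy i i' := by
    intro i i'
    rw [dpow hp (y i) (y i') (hy i) (hy i'), expand_sq (hIyy i i) (hIyy i i') (hIyy i' i')]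
  have hgap : simplexGap (lpDist p μ) p x y m n
      = (∑ j, ∑ j', m j * m j' * Jx j j') - 2 * (∑ j, ∑ i, m j * n i * Jxy j i)
        + (∑ i, ∑ i', n i * n i' * Jy i i') := by
    have e1 : (∑ j, ∑ i, m j * n i * lpDist p μ (x j) (y i) ^ p)
        = ∑ j, ∑ i, m j * n i * (Jx j j + Jy i i - 2 * Jxy j i) :=
      Finset.sum_congr rfl fun j _ => Finset.sum_congr rfl fun i _ => by rw [c1]
    have e2 : (∑ j₁, ∑ j₂, if j₁ < j₂ then m j₁ * m j₂ * lpDist p μ (x j₁) (x j₂) ^ p else 0)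
        = ∑ j₁, ∑ j₂,
            if j₁ < j₂ then m j₁ * m j₂ * (Jx j₁ j₁ + Jx j₂ j₂ - 2 * Jx j₁ j₂) else 0 :=
      Finset.sum_congr rfl fun a _ => Finset.sum_congr rfl fun b _ => by rw [c2]
    have e3 : (∑ i₁, ∑ i₂, if i₁ < i₂ then n i₁ * n i₂ * lpDist p μ (y i₁) (y i₂) ^ p else 0)
        = ∑ i₁, ∑ i₂,
            if i₁ < i₂ then n i₁ * n i₂ * (Jy i₁ i₁ + Jy i₂ i₂ - 2 * Jy i₁ i₂) else 0 :=
      Finset.sum_congr rfl fun a _ => Finset.sum_congr rfl fun b _ => by rw [c3]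
    simp only [simplexGap]
    rw [e1, e2, e3]
    exact gap_algebra m n Jx Jy Jxy hJxs hJys hbal
  -- the right-hand side
  set G : Ω → ℝ :=
    fun ω => (∑ j, m j * (x j : Ω → ℝ) ω) - (∑ i, n i * (y i : Ω → ℝ) ω) with hGdef
  have hG : ⇑((∑ j, m j • x j) - ∑ i, n i • y i) =ᶠ[ae μ] G := by
    have hsx : ∀ᵐ ω ∂μ, ∀ j, (⇑(m j • x j) : Ω → ℝ) ω = m j * (x j : Ω → ℝ) ω :=
      ae_all_iff.2 fun j => (AEEqFun.coeFn_smul (m j) (x j)).mono fun ω h => by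
        rw [h, Pi.smul_apply, smul_eq_mul]
    have hsy : ∀ᵐ ω ∂μ, ∀ i, (⇑(n i • y i) : Ω → ℝ) ω = n i * (y i : Ω → ℝ) ω :=
      ae_all_iff.2 fun i => (AEEqFun.coeFn_smul (n i) (y i)).mono fun ω h => by
        rw [h, Pi.smul_apply, smul_eq_mul]
    filter_upwards [AEEqFun.coeFn_sub (∑ j, m j • x j) (∑ i, n i • y i),
      coeFn_finsum Finset.univ (fun j => m j • x j),
      coeFn_finsum Finset.univ (fun i => n i • y i), hsx, hsy] with ω h1 h2 h3 h4 h5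
    rw [h1, Pi.sub_apply, h2, h3, hGdef]
    exact congrArg₂ (· - ·) (Finset.sum_congr rfl fun j _ => h4 j)
      (Finset.sum_congr rfl fun i _ => h5 i)
  have hGm : AEStronglyMeasurable G μ :=
    ((∑ j, m j • x j) - ∑ i, n i • y i).aestronglyMeasurable.congr hG
  have hGsq : ∀ ω, G ω ^ 2
      = (∑ j, ∑ j', (m j * m j') * ((x j : Ω → ℝ) ω * (x j' : Ω → ℝ) ω))
        + (∑ i, ∑ i', (n i * n i') * ((y i : Ω → ℝ) ω * (y i' : Ω → ℝ) ω))
        - 2 * (∑ j, ∑ i, (m j * n i) * ((x j : Ω → ℝ) ω * (y i : Ω → ℝ) ω)) := by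
    intro ω
    have e1 : G ω ^ 2 = (∑ j, m j * (x j : Ω → ℝ) ω) * (∑ j', m j' * (x j' : Ω → ℝ) ω)
        + (∑ i, n i * (y i : Ω → ℝ) ω) * (∑ i', n i' * (y i' : Ω → ℝ) ω)
        - 2 * ((∑ j, m j * (x j : Ω → ℝ) ω) * (∑ i, n i * (y i : Ω → ℝ) ω)) := by
      rw [hGdef]; ring
    rw [e1, Finset.sum_mul_sum, Finset.sum_mul_sum, Finset.sum_mul_sum]
    congr 1
    · congr 1
      · exact Finset.sum_congr rfl fun j _ => Finset.sum_congr rfl fun j' _ => by ring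
      · exact Finset.sum_congr rfl fun i _ => Finset.sum_congr rfl fun i' _ => by ring
    · congr 1
      exact Finset.sum_congr rfl fun j _ => Finset.sum_congr rfl fun i _ => by ring
  have IS1 : Integrable
      (fun ω => ∑ j, ∑ j', (m j * m j') * ((x j : Ω → ℝ) ω * (x j' : Ω → ℝ) ω)) μ :=
    integrable_finset_sum _ fun j _ =>
      integrable_finset_sum _ fun j' _ => (hIxx j j').const_mul _
  have IS2 : Integrable
      (fun ω => ∑ i, ∑ i', (n i * n i') * ((y i : Ω → ℝ) ω * (y i' : Ω → ℝ) ω)) μ :=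
    integrable_finset_sum _ fun i _ =>
      integrable_finset_sum _ fun i' _ => (hIyy i i').const_mul _
  have IS3 : Integrable
      (fun ω => ∑ j, ∑ i, (m j * n i) * ((x j : Ω → ℝ) ω * (y i : Ω → ℝ) ω)) μ :=
    integrable_finset_sum _ fun j _ =>
      integrable_finset_sum _ fun i _ => (hIxy j i).const_mul _
  have hintG : ∫ ω, G ω ^ 2 ∂μ
      = (∑ j, ∑ j', m j * m j' * Jx j j') - 2 * (∑ j, ∑ i, m j * n i * Jxy j i)
        + (∑ i, ∑ i', n i * n i' * Jy i i') := by
    have e0 : ∫ ω, G ω ^ 2 ∂μ = ∫ ω,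
        ((∑ j, ∑ j', (m j * m j') * ((x j : Ω → ℝ) ω * (x j' : Ω → ℝ) ω))
          + (∑ i, ∑ i', (n i * n i') * ((y i : Ω → ℝ) ω * (y i' : Ω → ℝ) ω))
          - 2 * (∑ j, ∑ i, (m j * n i) * ((x j : Ω → ℝ) ω * (y i : Ω → ℝ) ω))) ∂μ :=
      integral_congr_ae (ae_of_all _ hGsq)
    have h1 : Integrable (fun ω =>
        (∑ j, ∑ j', (m j * m j') * ((x j : Ω → ℝ) ω * (x j' : Ω → ℝ) ω))
        + (∑ i, ∑ i', (n i * n i') * ((y i : Ω → ℝ) ω * (y i' : Ω → ℝ) ω))) μ := IS1.add IS2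
    have h2 : Integrable (fun ω =>
        2 * (∑ j, ∑ i, (m j * n i) * ((x j : Ω → ℝ) ω * (y i : Ω → ℝ) ω))) μ :=
      IS3.const_mul 2
    rw [e0, integral_sub h1 h2, integral_add IS1 IS2, integral_const_mul,
      integral_double_sum _ _ hIxx, integral_double_sum _ _ hIyy,
      integral_double_sum _ _ hIxy]
    simp only [hJxdef, hJydef, hJxydef]
    ring
  have part1 : simplexGap (lpDist p μ) p x y m n
      = (eLpNorm (⇑((∑ j, m j • x j) - ∑ i, n i • y i)) 2 μ).toReal ^ 2 := by
    rw [hgap, eLpNorm_congr_ae hG, sq_eLpNorm hGm, hintG]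
  refine ⟨part1, ?_⟩
  rw [part1]
  have hmemG : MemLp G 2 μ := by
    apply MemLp.sub
    · exact memLp_finset_sum _ fun j _ => (memL2_01 hp (hxLp j) (hx j)).const_mul (m j)
    · exact memLp_finset_sum _ fun i _ => (memL2_01 hp (hyLp i) (hy i)).const_mul (n i)
  have hfin : eLpNorm (⇑((∑ j, m j • x j) - ∑ i, n i • y i)) 2 μ ≠ ⊤ := by
    rw [eLpNorm_congr_ae hG]; exact hmemG.2.ne
  constructor
  · intro h
    have h0 : (eLpNorm (⇑((∑ j, m j • x j) - ∑ i, n i • y i)) 2 μ).toReal = 0 :=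
      (pow_eq_zero_iff two_ne_zero).1 h
    rcases (ENNReal.toReal_eq_zero_iff _).1 h0 with h1 | h1
    · have h2 := (eLpNorm_eq_zero_iff
        ((∑ j, m j • x j) - ∑ i, n i • y i).aestronglyMeasurable two_ne_zero).1 h1
      have h3 : (∑ j, m j • x j) - ∑ i, n i • y i = 0 :=
        AEEqFun.ext (h2.trans (AEEqFun.coeFn_zero).symm)
      exact sub_eq_zero.1 h3
    · exact absurd h1 hfin
  · intro h
    rw [h, sub_self, eLpNorm_congr_ae AEEqFun.coeFn_zero, eLpNorm_zero]
    simp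
end

section
/- Let p ∈ (0, ∞), let (Ω, μ) be a measure space, and let B ⊂ L_p(Ω, μ) be a two-valued set. Then B, with the metric inherited from L_p(Ω, μ), has p-negative type. -/
open MeasureTheory ENNReal Filter
open scoped Classical

lemma alg_identity {n : ℕ} (ζ a : Fin n → ℝ) (h : ∑ k, ζ k = 0) :
    ∑ j, ∑ i, (a j - a i) ^ 2 * (ζ j * ζ i) = -2 * (∑ k, ζ k * a k) ^ 2 := by
  have e : ∀ j i : Fin n, (a j - a i) ^ 2 * (ζ j * ζ i)
      = (a j ^ 2 * ζ j) * ζ i + ζ j * (a i ^ 2 * ζ i) - 2 * ((ζ j * a j) * (ζ i * a i)) := by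
    intros; ring
  simp only [e, Finset.sum_sub_distrib, Finset.sum_add_distrib, ← Finset.sum_mul,
    ← Finset.mul_sum, h]
  ring

lemma pair_key {Ω : Type*} [MeasurableSpace Ω] {μ : Measure Ω} {p : ℝ} (hp : 0 < p)
    (f g : Ω →ₘ[μ] ℝ)
    (hf : MemLp (⇑f) (ENNReal.ofReal p) μ) (hg : MemLp (⇑g) (ENNReal.ofReal p) μ)
    (h01f : ∀ᵐ ω ∂μ, (f : Ω → ℝ) ω ∈ ({0, 1} : Set ℝ))
    (h01g : ∀ᵐ ω ∂μ, (g : Ω → ℝ) ω ∈ ({0, 1} : Set ℝ)) :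
    lpDist p μ f g ^ p = ∫ ω, ((f : Ω → ℝ) ω - g ω) ^ 2 ∂μ ∧
      Integrable (fun ω => ((f : Ω → ℝ) ω - g ω) ^ 2) μ := by
  have hne0 : ENNReal.ofReal p ≠ 0 := by simp [hp, hp.le]
  have hnetop : ENNReal.ofReal p ≠ ∞ := ENNReal.ofReal_ne_top
  have htr : (ENNReal.ofReal p).toReal = p := ENNReal.toReal_ofReal hp.le
  have hsub : MemLp (⇑(f - g)) (ENNReal.ofReal p) μ :=
    (hf.sub hg).ae_eq (AEEqFun.coeFn_sub f g).symm
  have key : (fun ω => ‖(⇑(f - g)) ω‖ ^ p) =ᵐ[μ] fun ω => ((f : Ω → ℝ) ω - g ω) ^ 2 := by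
    filter_upwards [AEEqFun.coeFn_sub f g, h01f, h01g] with ω hω hfω hgω
    rw [hω]
    simp only [Set.mem_insert_iff, Set.mem_singleton_iff] at hfω hgω
    simp only [Pi.sub_apply]
    rcases hfω with hf1 | hf1 <;> rcases hgω with hg1 | hg1 <;>
      simp [hf1, hg1, Real.zero_rpow hp.ne', Real.norm_eq_abs, abs_neg]
  have hint : Integrable (fun ω => ((f : Ω → ℝ) ω - g ω) ^ 2) μ := by
    have h2 := hsub.integrable_norm_rpow hne0 hnetop
    rw [htr] at h2
    exact h2.congr key
  refine ⟨?_, hint⟩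
  rw [lpDist, hsub.eLpNorm_eq_integral_rpow_norm hne0 hnetop, htr,
    ENNReal.toReal_ofReal (by positivity), integral_congr_ae key]
  have hI : 0 ≤ ∫ ω, ((f : Ω → ℝ) ω - g ω) ^ 2 ∂μ :=
    integral_nonneg fun ω => sq_nonneg _
  rw [← Real.rpow_mul hI, inv_mul_cancel₀ hp.ne', Real.rpow_one]

/-- A two-valued subset of `L_p(Ω, μ)` has `p`-negative type with respect
to the metric inherited from `L_p(Ω, μ)`. -/
theorem twoValued_hasNegativeType {Ω : Type*} [MeasurableSpace Ω] (μ : Measure Ω)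
    (p : ℝ) (hp : 0 < p) (B : Set (Ω →ₘ[μ] ℝ)) (hB : TwoValued B)
    (hBLp : ∀ f ∈ B, MemLp (⇑f) (ENNReal.ofReal p) μ) :
    HasNegativeType (lpDist p μ) p B := by
  intro n _ z _ hzB ζ hζ
  have hpair := fun j i : Fin n =>
    pair_key hp (z j) (z i) (hBLp _ (hzB j)) (hBLp _ (hzB i)) (hB.2 _ (hzB j)) (hB.2 _ (hzB i))
  calc ∑ j, ∑ i, lpDist p μ (z j) (z i) ^ p * (ζ j * ζ i)
      = ∑ j, ∑ i, ∫ ω, ((z j : Ω → ℝ) ω - (z i : Ω → ℝ) ω) ^ 2 * (ζ j * ζ i) ∂μ := by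
        refine Finset.sum_congr rfl fun j _ => Finset.sum_congr rfl fun i _ => ?_
        rw [(hpair j i).1, ← integral_mul_const]
    _ = ∫ ω, ∑ j, ∑ i, ((z j : Ω → ℝ) ω - (z i : Ω → ℝ) ω) ^ 2 * (ζ j * ζ i) ∂μ := by
        rw [integral_finset_sum _ fun j _ => integrable_finset_sum _ fun i _ =>
          ((hpair j i).2).mul_const _]
        exact Finset.sum_congr rfl fun j _ =>
          (integral_finset_sum _ fun i _ => ((hpair j i).2).mul_const _).symm
    _ = ∫ ω, -2 * (∑ k, ζ k * (z k : Ω → ℝ) ω) ^ 2 ∂μ :=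
        integral_congr_ae (Eventually.of_forall fun ω =>
          alg_identity ζ (fun k => (z k : Ω → ℝ) ω) hζ)
    _ ≤ 0 := by
        refine integral_nonpos fun ω => ?_
        simp only [Pi.zero_apply]
        nlinarith [sq_nonneg (∑ k, ζ k * (z k : Ω → ℝ) ω)]
end

section
/- Let p ∈ (0, ∞) and let (Ω, μ) be a measure space. Every two-valued Schauder basis of L_p(Ω, μ) has strict p-negative type when viewed as a metric subspace of L_p(Ω, μ). -/
open MeasureTheory ENNReal Filter
open scoped Classical

/-- `f` is a (Schauder) basis of `L_p(Ω, μ)`: each `f k` lies in `L_p(Ω, μ)`, and every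
element of `L_p(Ω, μ)` admits a unique expansion `∑ a_k f_k` with real coefficients that
converges in the `L_p` (quasi-)norm metric. -/
def IsSchauderBasisLp {Ω : Type*} [MeasurableSpace Ω] (p : ℝ) (μ : Measure Ω)
    (f : ℕ → (Ω →ₘ[μ] ℝ)) : Prop :=
  (∀ k, MemLp (⇑(f k)) (ENNReal.ofReal p) μ) ∧
    ∀ g : Ω →ₘ[μ] ℝ, MemLp (⇑g) (ENNReal.ofReal p) μ →
      ∃! a : ℕ → ℝ,
        Tendsto (fun N => lpDist p μ (∑ k ∈ Finset.range N, a k • f k) g) atTop (nhds 0)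

section Aux

variable {Ω : Type*} [MeasurableSpace Ω] {μ : Measure Ω} {p : ℝ}

lemma twoval_aux (hp : 0 < p) {g : Ω → ℝ}
    (hmem : MemLp g (ENNReal.ofReal p) μ)
    (hval : ∀ᵐ ω ∂μ, |g ω| = 0 ∨ |g ω| = 1) :
    Integrable g μ ∧
      ((eLpNorm g (ENNReal.ofReal p) μ).toReal) ^ p = ∫ ω, |g ω| ∂μ := by
  have hp0 : (ENNReal.ofReal p) ≠ 0 := by
    simp [ENNReal.ofReal_eq_zero, not_le, hp]
  have hpt : (ENNReal.ofReal p).toReal = p := ENNReal.toReal_ofReal hp.le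
  have hae : ∀ᵐ ω ∂μ, ((‖g ω‖₊ : ℝ≥0∞)) ^ p = (‖g ω‖₊ : ℝ≥0∞) := by
    filter_upwards [hval] with ω hω
    rcases hω with h | h
    · have : g ω = 0 := abs_eq_zero.mp h
      simp [this, ENNReal.zero_rpow_of_pos hp]
    · have h1 : ‖g ω‖₊ = 1 := by
        ext
        simpa [Real.norm_eq_abs] using h
      simp [h1]
  have hA : (∫⁻ ω, ((‖g ω‖₊ : ℝ≥0∞)) ^ p ∂μ) = ∫⁻ ω, (‖g ω‖₊ : ℝ≥0∞) ∂μ :=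
    lintegral_congr_ae hae
  have hsnorm : eLpNorm g (ENNReal.ofReal p) μ
      = (∫⁻ ω, (‖g ω‖₊ : ℝ≥0∞) ^ p ∂μ) ^ (1 / p) := by
    rw [eLpNorm_eq_lintegral_rpow_enorm_toReal hp0 ENNReal.ofReal_ne_top, hpt]
    rfl
  have hfin : (∫⁻ ω, (‖g ω‖₊ : ℝ≥0∞) ∂μ) < ⊤ := by
    have h2 := hmem.2
    rw [hsnorm] at h2
    rw [← hA]
    exact (ENNReal.rpow_lt_top_iff_of_pos (by positivity)).mp h2
  have hint : Integrable g μ := ⟨hmem.1, hfin⟩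
  refine ⟨hint, ?_⟩
  rw [hsnorm, hA, ← ENNReal.toReal_rpow, ← Real.rpow_mul ENNReal.toReal_nonneg,
    one_div_mul_cancel hp.ne', Real.rpow_one]
  have h3 := integral_norm_eq_lintegral_enorm hmem.1
  simpa [Real.norm_eq_abs, enorm_eq_nnnorm] using h3.symm

lemma key_lemma (hp : 0 < p) {n : ℕ} (F : Fin n → Ω → ℝ)
    (hmem : ∀ j, MemLp (F j) (ENNReal.ofReal p) μ)
    (hval : ∀ j, ∀ᵐ ω ∂μ, F j ω = 0 ∨ F j ω = 1)
    (ζ : Fin n → ℝ) (hsum : ∑ k, ζ k = 0) :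
    Integrable (fun ω => (∑ j, ζ j * F j ω) ^ 2) μ ∧
    ∑ j, ∑ i, ((eLpNorm (fun ω => F j ω - F i ω) (ENNReal.ofReal p) μ).toReal) ^ p * (ζ j * ζ i)
      = -2 * ∫ ω, (∑ j, ζ j * F j ω) ^ 2 ∂μ := by
  have hIntF : ∀ j, Integrable (F j) μ := by
    intro j
    refine (twoval_aux hp (hmem j) ?_).1
    filter_upwards [hval j] with ω h
    rcases h with h | h <;> simp [h]
  have hIntP : ∀ j i, Integrable (fun ω => F j ω * F i ω) μ := by
    intro j i
    refine (hIntF j).mono ((hmem j).1.mul (hmem i).1) ?_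
    filter_upwards [hval i] with ω h
    rcases h with h | h <;> simp [h, abs_nonneg]
  set c : Fin n → ℝ := fun j => ∫ ω, F j ω ∂μ with hc
  set m : Fin n → Fin n → ℝ := fun j i => ∫ ω, F j ω * F i ω ∂μ with hm
  have dterm : ∀ j i, ((eLpNorm (fun ω => F j ω - F i ω) (ENNReal.ofReal p) μ).toReal) ^ p
      = c j + c i - 2 * m j i := by
    intro j i
    have hsub : MemLp (fun ω => F j ω - F i ω) (ENNReal.ofReal p) μ := (hmem j).sub (hmem i)
    have habs : ∀ᵐ ω ∂μ, |F j ω - F i ω| = 0 ∨ |F j ω - F i ω| = 1 := by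
      filter_upwards [hval j, hval i] with ω h1 h2
      rcases h1 with h1 | h1 <;> rcases h2 with h2 | h2 <;> simp [h1, h2]
    obtain ⟨hint, heq⟩ := twoval_aux hp hsub habs
    rw [heq]
    have hptw : ∀ᵐ ω ∂μ, |F j ω - F i ω| = F j ω + F i ω - 2 * (F j ω * F i ω) := by
      filter_upwards [hval j, hval i] with ω h1 h2
      rcases h1 with h1 | h1 <;> rcases h2 with h2 | h2 <;> rw [h1, h2] <;> norm_num
    have hadd : Integrable (fun ω => F j ω + F i ω) μ := (hIntF j).add (hIntF i)
    rw [integral_congr_ae hptw, integral_sub hadd ((hIntP j i).const_mul 2),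
      integral_add (hIntF j) (hIntF i), integral_const_mul]
  have hsq : ∀ ω, (∑ j, ζ j * F j ω) ^ 2 = ∑ j, ∑ i, (ζ j * ζ i) * (F j ω * F i ω) := by
    intro ω
    rw [sq, Finset.sum_mul_sum]
    exact Finset.sum_congr rfl fun j _ => Finset.sum_congr rfl fun i _ => by ring
  have hIntInner : ∀ j i, Integrable (fun ω => (ζ j * ζ i) * (F j ω * F i ω)) μ :=
    fun j i => (hIntP j i).const_mul _
  have hIntSum : Integrable (fun ω => (∑ j, ζ j * F j ω) ^ 2) μ := by
    have h1 : Integrable (fun ω => ∑ j, ∑ i, (ζ j * ζ i) * (F j ω * F i ω)) μ :=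
      integrable_finset_sum _ fun j _ => integrable_finset_sum _ fun i _ => hIntInner j i
    exact h1.congr (Filter.Eventually.of_forall fun ω => (hsq ω).symm)
  refine ⟨hIntSum, ?_⟩
  have hI : ∫ ω, (∑ j, ζ j * F j ω) ^ 2 ∂μ = ∑ j, ∑ i, (ζ j * ζ i) * m j i := by
    rw [integral_congr_ae (Filter.Eventually.of_forall hsq),
      integral_finset_sum _ fun j _ => integrable_finset_sum _ fun i _ => hIntInner j i]
    refine Finset.sum_congr rfl fun j _ => ?_
    rw [integral_finset_sum _ fun i _ => hIntInner j i]
    exact Finset.sum_congr rfl fun i _ => integral_const_mul _ _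
  have split : ∑ j, ∑ i, ((c j + c i - 2 * m j i) * (ζ j * ζ i))
      = (∑ j, ∑ i, c j * (ζ j * ζ i)) + (∑ j, ∑ i, c i * (ζ j * ζ i))
        - 2 * (∑ j, ∑ i, (ζ j * ζ i) * m j i) := by
    rw [Finset.mul_sum, ← Finset.sum_add_distrib, ← Finset.sum_sub_distrib]
    refine Finset.sum_congr rfl fun j _ => ?_
    rw [Finset.mul_sum, ← Finset.sum_add_distrib, ← Finset.sum_sub_distrib]
    exact Finset.sum_congr rfl fun i _ => by ring
  have T1 : ∑ j, ∑ i, c j * (ζ j * ζ i) = 0 := by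
    have h1 : ∀ j : Fin n, ∑ i, c j * (ζ j * ζ i) = (c j * ζ j) * ∑ i, ζ i := by
      intro j
      rw [Finset.mul_sum]
      exact Finset.sum_congr rfl fun i _ => by ring
    simp [h1, hsum]
  have T2 : ∑ j, ∑ i, c i * (ζ j * ζ i) = 0 := by
    have h1 : ∀ j : Fin n, ∑ i, c i * (ζ j * ζ i) = ζ j * ∑ i, c i * ζ i := by
      intro j
      rw [Finset.mul_sum]
      exact Finset.sum_congr rfl fun i _ => by ring
    rw [Finset.sum_congr rfl fun j _ => h1 j, ← Finset.sum_mul, hsum, zero_mul]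
  calc ∑ j, ∑ i, ((eLpNorm (fun ω => F j ω - F i ω) (ENNReal.ofReal p) μ).toReal) ^ p * (ζ j * ζ i)
      = ∑ j, ∑ i, ((c j + c i - 2 * m j i) * (ζ j * ζ i)) :=
        Finset.sum_congr rfl fun j _ => Finset.sum_congr rfl fun i _ => by rw [dterm]
    _ = -2 * ∫ ω, (∑ j, ζ j * F j ω) ^ 2 ∂μ := by
        rw [split, T1, T2, hI]; ring

lemma coeFn_finset_sum {ι : Type*} (s : Finset ι) (g : ι → (Ω →ₘ[μ] ℝ)) :
    ⇑(∑ j ∈ s, g j) =ᵐ[μ] fun ω => ∑ j ∈ s, (g j : Ω → ℝ) ω := by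
  classical
  induction s using Finset.induction_on with
  | empty =>
    filter_upwards [AEEqFun.coeFn_zero (β := ℝ) (μ := μ)] with ω h
    simpa using h
  | insert a s hnot ih =>
    filter_upwards [AEEqFun.coeFn_add (g a) (∑ j ∈ s, g j), ih] with ω h1 h2
    rw [Finset.sum_insert hnot, h1, Finset.sum_insert hnot, Pi.add_apply, h2]

lemma lpDist_zero_zero : lpDist p μ 0 0 = 0 := by
  rw [lpDist, sub_zero, eLpNorm_congr_ae (AEEqFun.coeFn_zero (β := ℝ) (μ := μ)), eLpNorm_zero,
    ENNReal.toReal_zero]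

end Aux

/-- Every two-valued (Schauder) basis of `L_p(Ω, μ)` has strict
`p`-negative type when viewed as a metric subspace of `L_p(Ω, μ)`. -/
theorem twoValued_schauderBasis_strictNegativeType {Ω : Type*} [MeasurableSpace Ω]
    (μ : Measure Ω) (p : ℝ) (hp : 0 < p) (f : ℕ → (Ω →ₘ[μ] ℝ))
    (hbasis : IsSchauderBasisLp p μ f) (htv : TwoValued (Set.range f)) :
    HasStrictNegativeType (lpDist p μ) p (Set.range f) := by
  -- the core identity, valid for any weights summing to zero
  have core : ∀ n : ℕ, ∀ z : Fin n → (Ω →ₘ[μ] ℝ), (∀ k, z k ∈ Set.range f) →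
      ∀ ζ : Fin n → ℝ, ∑ k, ζ k = 0 →
        Integrable (fun ω => (∑ j, ζ j * (z j : Ω → ℝ) ω) ^ 2) μ ∧
        ∑ j, ∑ i, lpDist p μ (z j) (z i) ^ p * (ζ j * ζ i)
          = -2 * ∫ ω, (∑ j, ζ j * (z j : Ω → ℝ) ω) ^ 2 ∂μ := by
    intro n z hzB ζ hζ
    set F : Fin n → Ω → ℝ := fun j => ⇑(z j) with hF
    have hmemF : ∀ j, MemLp (F j) (ENNReal.ofReal p) μ := by
      intro j
      obtain ⟨mm, hmm⟩ := hzB j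
      have h1 := hbasis.1 mm
      rw [hmm] at h1
      exact h1
    have hvalF : ∀ j, ∀ᵐ ω ∂μ, F j ω = 0 ∨ F j ω = 1 := by
      intro j
      filter_upwards [htv.2 (z j) (hzB j)] with ω hω
      simpa using hω
    obtain ⟨hint, heq⟩ := key_lemma hp F hmemF hvalF ζ hζ
    refine ⟨hint, ?_⟩
    rw [← heq]
    refine Finset.sum_congr rfl fun j _ => Finset.sum_congr rfl fun i _ => ?_
    have hco : (⇑(z j - z i) : Ω → ℝ) =ᵐ[μ] fun ω => F j ω - F i ω :=
      AEEqFun.coeFn_sub (z j) (z i)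
    rw [lpDist, eLpNorm_congr_ae hco]
  -- strictness: if the integral vanishes, the weights vanish
  have strictcore : ∀ n : ℕ, ∀ z : Fin n → (Ω →ₘ[μ] ℝ), Function.Injective z →
      (∀ k, z k ∈ Set.range f) → ∀ ζ : Fin n → ℝ,
      ((fun ω => ∑ j, ζ j * (z j : Ω → ℝ) ω) =ᵐ[μ] 0) → ζ = 0 := by
    intro n z hinj hzB ζ hae0
    choose k hk using fun j => hzB j
    have kinj : Function.Injective k := fun a b hab => hinj (by rw [← hk a, ← hk b, hab])
    set a : ℕ → ℝ := fun mm => ∑ j, if k j = mm then ζ j else 0 with ha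
    have hS : (∑ j, ζ j • z j) = (0 : Ω →ₘ[μ] ℝ) := by
      apply AEEqFun.ext
      have hsmul : ∀ᵐ ω ∂μ, ∀ j : Fin n, (⇑(ζ j • z j)) ω = ζ j * (z j : Ω → ℝ) ω := by
        rw [MeasureTheory.ae_all_iff]
        intro j
        filter_upwards [AEEqFun.coeFn_smul (ζ j) (z j)] with ω h
        simpa using h
      filter_upwards [coeFn_finset_sum Finset.univ (fun j => ζ j • z j), hsmul, hae0,
        AEEqFun.coeFn_zero (β := ℝ) (μ := μ)] with ω h1 h2 h3 h4
      rw [h1, h4]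
      calc ∑ j, (⇑(ζ j • z j)) ω = ∑ j, ζ j * (z j : Ω → ℝ) ω :=
            Finset.sum_congr rfl fun j _ => h2 j
        _ = 0 := h3
        _ = (0 : Ω → ℝ) ω := rfl
    have h0mem : MemLp (⇑(0 : Ω →ₘ[μ] ℝ)) (ENNReal.ofReal p) μ :=
      (memLp_congr_ae (AEEqFun.coeFn_zero (β := ℝ) (μ := μ))).mpr MemLp.zero
    obtain ⟨a₀, _, huniq⟩ := hbasis.2 0 h0mem
    set M : ℕ := Finset.univ.sup k with hM
    have hP : Tendsto (fun N => lpDist p μ (∑ m ∈ Finset.range N, a m • f m) 0) atTop (nhds 0) := by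
      have heventually : ∀ᶠ N in atTop,
          lpDist p μ (∑ m ∈ Finset.range N, a m • f m) 0 = 0 := by
        filter_upwards [eventually_ge_atTop (M + 1)] with N hN
        have hkmem : ∀ j, k j ∈ Finset.range N := fun j =>
          Finset.mem_range.mpr (lt_of_le_of_lt
            (Finset.le_sup (f := k) (Finset.mem_univ j)) (by omega))
        have hsumN : ∑ m ∈ Finset.range N, a m • f m = ∑ j, ζ j • z j := by
          calc ∑ m ∈ Finset.range N, a m • f m
              = ∑ m ∈ Finset.range N, ∑ j, (if k j = m then ζ j else 0) • f m := by
                refine Finset.sum_congr rfl fun m _ => ?_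
                rw [ha, Finset.sum_smul]
            _ = ∑ j, ∑ m ∈ Finset.range N, (if k j = m then ζ j • f m else 0) := by
                rw [Finset.sum_comm]
                refine Finset.sum_congr rfl fun j _ => Finset.sum_congr rfl fun m _ => ?_
                split <;> simp
            _ = ∑ j, ζ j • f (k j) := by
                refine Finset.sum_congr rfl fun j _ => ?_
                rw [Finset.sum_ite_eq, if_pos (hkmem j)]
            _ = ∑ j, ζ j • z j := Finset.sum_congr rfl fun j _ => by rw [hk j]
        rw [hsumN, hS, lpDist_zero_zero]
      exact Tendsto.congr' (heventually.mono fun N h => h.symm) tendsto_const_nhds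
    have hP0 : Tendsto (fun N => lpDist p μ (∑ m ∈ Finset.range N, (0 : ℕ → ℝ) m • f m) 0)
        atTop (nhds 0) := by
      have : ∀ N, lpDist p μ (∑ m ∈ Finset.range N, (0 : ℕ → ℝ) m • f m) 0 = 0 := by
        intro N
        have : (∑ m ∈ Finset.range N, (0 : ℕ → ℝ) m • f m) = (0 : Ω →ₘ[μ] ℝ) := by
          simp
        rw [this, lpDist_zero_zero]
      have hfun : (fun N => lpDist p μ (∑ m ∈ Finset.range N, (0 : ℕ → ℝ) m • f m) 0)
          = fun _ => (0 : ℝ) := funext this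
      rw [hfun]
      exact tendsto_const_nhds
    have ha_eq : a = 0 := (huniq a hP).trans (huniq 0 hP0).symm
    funext j
    have hval : a (k j) = ζ j := by
      rw [ha]
      simp only
      rw [Finset.sum_eq_single j]
      · simp
      · intro j' _ hne
        exact if_neg fun hkk => hne (kinj hkk)
      · intro h
        exact absurd (Finset.mem_univ j) h
    have : a (k j) = 0 := by rw [ha_eq]; rfl
    rw [← hval, this]; rfl
  constructor
  · intro n _ z hinj hzB ζ hζ
    obtain ⟨hint, heq⟩ := core n z hzB ζ hζ
    rw [heq]
    have hnn : 0 ≤ ∫ ω, (∑ j, ζ j * (z j : Ω → ℝ) ω) ^ 2 ∂μ :=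
      integral_nonneg fun ω => sq_nonneg _
    linarith
  · intro n _ z hinj hzB ζ hζ hζne
    obtain ⟨hint, heq⟩ := core n z hzB ζ hζ
    rw [heq]
    have hnn : 0 ≤ ∫ ω, (∑ j, ζ j * (z j : Ω → ℝ) ω) ^ 2 ∂μ :=
      integral_nonneg fun ω => sq_nonneg _
    rcases eq_or_lt_of_le hnn with h0 | hpos
    · exfalso
      apply hζne
      have hae2 : (fun ω => (∑ j, ζ j * (z j : Ω → ℝ) ω) ^ 2) =ᵐ[μ] 0 :=
        (integral_eq_zero_iff_of_nonneg (fun ω => sq_nonneg _) hint).mp h0.symm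
      have hae0 : (fun ω => ∑ j, ζ j * (z j : Ω → ℝ) ω) =ᵐ[μ] 0 := by
        filter_upwards [hae2] with ω hω
        exact pow_eq_zero_iff (two_ne_zero).elim |>.mp hω
      exact strictcore n z hinj hzB ζ hae0
    · linarith
end

section
/- Let p ∈ (0, ∞), let (Ω, μ) be a measure space, and let B ⊂ L_p(Ω, μ) be a two-valued set that is affinely dependent when L_p(Ω, μ) is considered as a real vector space. Then no metric space that has strict p-negative type is isometric to B (with the metric B inherits from L_p(Ω, μ)). In particular, no ultrametric space is isometric to B. -/
open MeasureTheory ENNReal Filter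
open scoped Classical

lemma ultra_pd {X : Type*} [DecidableEq X] (e : X → X → ℝ) (hsymm : ∀ x y, e x y = e y x)
    (hself : ∀ x, e x x = 0) (hpos : ∀ x y, x ≠ y → 0 < e x y)
    (hultra : ∀ x y z, e x z ≤ max (e x y) (e y z)) :
    ∀ N : ℕ, ∀ s : Finset X, s.card ≤ N → ∀ c : ℝ, 0 < c →
      (∀ x ∈ s, ∀ y ∈ s, e x y ≤ c) → ∀ ζ : X → ℝ, (∃ x ∈ s, ζ x ≠ 0) →
      0 < ∑ x ∈ s, ∑ y ∈ s, (c - e x y) * (ζ x * ζ y) := by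
  intro N
  induction N with
  | zero =>
    rintro s hs c hc hle ζ ⟨x, hx, -⟩
    simp [Finset.card_eq_zero.mp (Nat.le_zero.mp hs)] at hx
  | succ N ih =>
    rintro s hs c hc hle ζ ⟨x₀, hx₀, hζ₀⟩
    by_cases hsub : ∀ x ∈ s, ∀ y ∈ s, x = y
    · have hsx : s = {x₀} := Finset.eq_singleton_iff_unique_mem.mpr
        ⟨hx₀, fun y hy => (hsub y hy x₀ hx₀)⟩
      rw [hsx]
      simp only [Finset.sum_singleton, hself, sub_zero]
      exact mul_pos hc (mul_self_pos.mpr hζ₀)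
    · push_neg at hsub
      obtain ⟨a₁, ha₁, b₁, hb₁, hab₁⟩ := hsub
      have hne : s.Nonempty := ⟨a₁, ha₁⟩
      -- the maximum distance M, attained at (a, b)
      set M : ℝ := s.sup' hne (fun x => s.sup' hne (fun y => e x y)) with hM
      have hMle : ∀ x ∈ s, ∀ y ∈ s, e x y ≤ M := by
        intro x hx y hy
        exact le_trans (Finset.le_sup' _ hy)
          (Finset.le_sup' (fun x => s.sup' hne (fun y => e x y)) hx)
      have hMpos : 0 < M := lt_of_lt_of_le (hpos a₁ b₁ hab₁) (hMle a₁ ha₁ b₁ hb₁)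
      obtain ⟨a, ha, hae⟩ := Finset.exists_mem_eq_sup' hne (fun x => s.sup' hne (fun y => e x y))
      obtain ⟨b, hb, hbe⟩ := Finset.exists_mem_eq_sup' hne (fun y => e a y)
      have heab : e a b = M := by rw [hM, hae, hbe]
      have hMc : M ≤ c := heab ▸ hle a ha b hb
      -- split s into the class of a and the rest
      set t : Finset X := s.filter (fun y => e a y < M) with ht
      set u : Finset X := s \ t with hu
      have hts : t ⊆ s := Finset.filter_subset _ _
      have hat : a ∈ t := Finset.mem_filter.mpr ⟨ha, by rw [hself]; exact hMpos⟩
      have hbu : b ∈ u := Finset.mem_sdiff.mpr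
        ⟨hb, fun hbt => absurd (Finset.mem_filter.mp hbt).2 (by rw [heab]; exact lt_irrefl M)⟩
      have htcard : t.card ≤ N := by
        have : t.card < s.card := Finset.card_lt_card
          (Finset.ssubset_iff_of_subset hts |>.mpr ⟨b, hb, (Finset.mem_sdiff.mp hbu).2⟩)
        omega
      have hucard : u.card ≤ N := by
        have hau : a ∉ u := fun h => (Finset.mem_sdiff.mp h).2 hat
        have : u.card < s.card := Finset.card_lt_card
          (Finset.ssubset_iff_of_subset (Finset.sdiff_subset) |>.mpr ⟨a, ha, hau⟩)
        omega
      -- cross distances are exactly M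
      have hcross : ∀ y ∈ t, ∀ z ∈ u, e y z = M := by
        intro y hy z hz
        obtain ⟨hys, hyM⟩ := Finset.mem_filter.mp hy
        obtain ⟨hzs, hzt⟩ := Finset.mem_sdiff.mp hz
        have hzM : e a z = M :=
          le_antisymm (hMle a ha z hzs) (not_lt.mp (fun h => hzt (Finset.mem_filter.mpr ⟨hzs, h⟩)))
        have h1 : e y z ≤ M := hMle y hys z hzs
        have h2 : M ≤ e y z := by
          have := hultra a y z
          rw [hzM] at this
          rcases le_max_iff.mp this with h | h
          · exact absurd h (not_le.mpr hyM)
          · exact h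
        exact le_antisymm h1 h2
      -- the decomposition
      have hsums : ∀ x ∈ s, ∀ y ∈ s, (c - e x y) * (ζ x * ζ y)
          = (c - M) * (ζ x * ζ y) + (M - e x y) * (ζ x * ζ y) := by
        intro x _ y _; ring
      have hsplit : ∑ x ∈ s, ∑ y ∈ s, (c - e x y) * (ζ x * ζ y)
          = (c - M) * (∑ x ∈ s, ζ x) ^ 2 + ∑ x ∈ s, ∑ y ∈ s, (M - e x y) * (ζ x * ζ y) := by
        rw [Finset.sum_congr rfl (fun x hx => Finset.sum_congr rfl (fun y hy => hsums x hx y hy))]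
        rw [Finset.sum_congr rfl (fun x _ => Finset.sum_add_distrib), Finset.sum_add_distrib]
        congr 1
        rw [sq, Finset.sum_mul_sum, Finset.mul_sum]
        exact Finset.sum_congr rfl fun x _ => by rw [Finset.mul_sum]
      have hblock : ∑ x ∈ s, ∑ y ∈ s, (M - e x y) * (ζ x * ζ y)
          = (∑ x ∈ t, ∑ y ∈ t, (M - e x y) * (ζ x * ζ y))
            + ∑ x ∈ u, ∑ y ∈ u, (M - e x y) * (ζ x * ζ y) := by
        have hpart : ∀ f : X → ℝ, ∑ x ∈ s, f x = ∑ x ∈ t, f x + ∑ x ∈ u, f x := by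
          intro f
          rw [hu, ← Finset.sum_sdiff hts]
          ring
        rw [hpart]
        have hz1 : ∀ x ∈ t, ∑ y ∈ s, (M - e x y) * (ζ x * ζ y)
            = ∑ y ∈ t, (M - e x y) * (ζ x * ζ y) := by
          intro x hx
          rw [hpart]
          have : ∑ y ∈ u, (M - e x y) * (ζ x * ζ y) = 0 :=
            Finset.sum_eq_zero fun y hy => by rw [hcross x hx y hy, sub_self, zero_mul]
          rw [this, add_zero]
        have hz2 : ∀ x ∈ u, ∑ y ∈ s, (M - e x y) * (ζ x * ζ y)
            = ∑ y ∈ u, (M - e x y) * (ζ x * ζ y) := by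
          intro x hx
          rw [hpart]
          have : ∑ y ∈ t, (M - e x y) * (ζ x * ζ y) = 0 :=
            Finset.sum_eq_zero fun y hy => by
              rw [hsymm, hcross y hy x hx, sub_self, zero_mul]
          rw [this, zero_add]
        rw [Finset.sum_congr rfl hz1, Finset.sum_congr rfl hz2]
      -- nonnegativity / positivity of the blocks
      have hMleM : ∀ v : Finset X, v ⊆ s → v.card ≤ N →
          (0 ≤ ∑ x ∈ v, ∑ y ∈ v, (M - e x y) * (ζ x * ζ y)) ∧
          ((∃ x ∈ v, ζ x ≠ 0) → 0 < ∑ x ∈ v, ∑ y ∈ v, (M - e x y) * (ζ x * ζ y)) := by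
        intro v hvs hvc
        have hlev : ∀ x ∈ v, ∀ y ∈ v, e x y ≤ M := fun x hx y hy => hMle x (hvs hx) y (hvs hy)
        by_cases hex : ∃ x ∈ v, ζ x ≠ 0
        · have := ih v hvc M hMpos hlev ζ hex
          exact ⟨le_of_lt this, fun _ => this⟩
        · push_neg at hex
          have : ∑ x ∈ v, ∑ y ∈ v, (M - e x y) * (ζ x * ζ y) = 0 :=
            Finset.sum_eq_zero fun x hx => Finset.sum_eq_zero fun y _ => by
              rw [hex x hx, zero_mul, mul_zero]
          exact ⟨le_of_eq this.symm, fun h => absurd h (by push_neg; exact fun x hx => hex x hx)⟩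
      have hx₀tu : x₀ ∈ t ∨ x₀ ∈ u := by
        by_cases h : x₀ ∈ t
        · exact Or.inl h
        · exact Or.inr (Finset.mem_sdiff.mpr ⟨hx₀, h⟩)
      have hpos1 : 0 < (∑ x ∈ t, ∑ y ∈ t, (M - e x y) * (ζ x * ζ y))
            + ∑ x ∈ u, ∑ y ∈ u, (M - e x y) * (ζ x * ζ y) := by
        rcases hx₀tu with h | h
        · exact add_pos_of_pos_of_nonneg ((hMleM t hts htcard).2 ⟨x₀, h, hζ₀⟩)
            (hMleM u Finset.sdiff_subset hucard).1
        · exact add_pos_of_nonneg_of_pos (hMleM t hts htcard).1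
            ((hMleM u Finset.sdiff_subset hucard).2 ⟨x₀, h, hζ₀⟩)
      rw [hsplit, hblock]
      have : 0 ≤ (c - M) * (∑ x ∈ s, ζ x) ^ 2 :=
        mul_nonneg (sub_nonneg.mpr hMc) (sq_nonneg _)
      linarith

lemma lp_dist_pow {Ω : Type*} [MeasurableSpace Ω] {μ : Measure Ω} {p : ℝ} (hp : 0 < p)
    (f g : Ω →ₘ[μ] ℝ) (hf : MemLp (⇑f) (ENNReal.ofReal p) μ)
    (hg : MemLp (⇑g) (ENNReal.ofReal p) μ)
    (hf01 : ∀ᵐ ω ∂μ, (f : Ω → ℝ) ω ∈ ({0, 1} : Set ℝ))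
    (hg01 : ∀ᵐ ω ∂μ, (g : Ω → ℝ) ω ∈ ({0, 1} : Set ℝ)) :
    lpDist p μ f g ^ p = ∫ ω, (f ω - g ω) ^ 2 ∂μ ∧
      Integrable (fun ω => (f ω - g ω) ^ 2) μ := by
  have hq0 : ENNReal.ofReal p ≠ 0 := (ENNReal.ofReal_pos.mpr hp).ne'
  have hqt : ENNReal.ofReal p ≠ ∞ := ENNReal.ofReal_ne_top
  have hqre : (ENNReal.ofReal p).toReal = p := ENNReal.toReal_ofReal hp.le
  set h : Ω → ℝ := fun ω => (f ω - g ω) ^ 2 with hh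
  have hsm : AEStronglyMeasurable h μ := by
    have : AEStronglyMeasurable (fun ω => f ω - g ω) μ :=
      f.aestronglyMeasurable.sub g.aestronglyMeasurable
    have h2 := this.mul this
    simpa [hh, pow_two, Pi.mul_def] using h2
  have hnn : 0 ≤ᵐ[μ] h := Filter.Eventually.of_forall fun ω => sq_nonneg _
  -- the a.e. identity between the two integrands
  have hae : (fun ω => ‖(⇑(f - g)) ω‖ₑ ^ p) =ᵐ[μ] fun ω => ENNReal.ofReal (h ω) := by
    filter_upwards [AEEqFun.coeFn_sub f g, hf01, hg01] with ω hsub hfω hgω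
    rw [hsub]
    simp only [Set.mem_insert_iff, Set.mem_singleton_iff] at hfω hgω
    rcases hfω with hf1 | hf1 <;> rcases hgω with hg1 | hg1 <;>
      simp [Pi.sub_apply, hh, hf1, hg1, ENNReal.zero_rpow_of_pos hp]
  have hsubℒp : MemLp (⇑(f - g)) (ENNReal.ofReal p) μ :=
    (hf.sub hg).ae_eq (AEEqFun.coeFn_sub f g).symm
  have help : eLpNorm (⇑(f - g)) (ENNReal.ofReal p) μ
      = (∫⁻ ω, ENNReal.ofReal (h ω) ∂μ) ^ (1 / p) := by
    rw [eLpNorm_eq_lintegral_rpow_enorm_toReal hq0 hqt, hqre, lintegral_congr_ae hae]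
  have hfin : (∫⁻ ω, ENNReal.ofReal (h ω) ∂μ) ≠ ∞ := by
    have := hsubℒp.2
    rw [help] at this
    have := (ENNReal.rpow_lt_top_iff_of_pos (by positivity : (0:ℝ) < 1 / p)).mp this
    exact this.ne
  have hint : Integrable h μ :=
    ⟨hsm, (hasFiniteIntegral_iff_ofReal hnn).mpr hfin.lt_top⟩
  have heq : lpDist p μ f g ^ p = ∫ ω, h ω ∂μ := by
    rw [integral_eq_lintegral_of_nonneg_ae hnn hsm, lpDist, help, ← ENNReal.toReal_rpow]
    rw [← Real.rpow_mul ENNReal.toReal_nonneg, one_div, inv_mul_cancel₀ hp.ne', Real.rpow_one]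
  exact ⟨heq, hint⟩

lemma ultra_strict {X : Type*} [MetricSpace X] (p : ℝ) (hp : 0 < p)
    (hu : ∀ a b c : X, dist a c ≤ max (dist a b) (dist b c)) :
    HasStrictNegativeType (fun a b : X => dist a b) p Set.univ := by
  classical
  set e : X → X → ℝ := fun x y => dist x y ^ p with he
  have hsymm : ∀ x y, e x y = e y x := fun x y => by rw [he]; simp [dist_comm]
  have hself : ∀ x, e x x = 0 := fun x => by
    simp [he, Real.zero_rpow hp.ne']
  have hpos : ∀ x y, x ≠ y → 0 < e x y := fun x y h =>
    Real.rpow_pos_of_pos (dist_pos.mpr h) p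
  have hultra : ∀ x y z, e x z ≤ max (e x y) (e y z) := by
    intro x y z
    rcases le_total (dist x y) (dist y z) with h | h
    · refine le_trans ?_ (le_max_right _ _)
      exact Real.rpow_le_rpow dist_nonneg (le_trans (hu x y z) (max_le h le_rfl)) hp.le
    · refine le_trans ?_ (le_max_left _ _)
      exact Real.rpow_le_rpow dist_nonneg (le_trans (hu x y z) (max_le le_rfl h)) hp.le
  have key : ∀ n : ℕ, 2 ≤ n → ∀ z : Fin n → X, Function.Injective z →
      ∀ ζ : Fin n → ℝ, ∑ k, ζ k = 0 → ζ ≠ 0 →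
        ∑ j, ∑ i, dist (z j) (z i) ^ p * (ζ j * ζ i) < 0 := by
    intro n hn z hz ζ hsum hζ
    obtain ⟨k₀, hk₀⟩ := Function.ne_iff.mp hζ
    simp only [Pi.zero_apply] at hk₀
    set ζ' : X → ℝ := fun x => ∑ k, if z k = x then ζ k else 0 with hζ'
    have hζ'z : ∀ k, ζ' (z k) = ζ k := by
      intro k
      rw [hζ']
      simp only [hz.eq_iff]
      simp
    set s : Finset X := Finset.image z Finset.univ with hs
    set c : ℝ := (∑ j, ∑ i, e (z j) (z i)) + 1 with hc
    have hcpos : 0 < c := by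
      have : (0:ℝ) ≤ ∑ j, ∑ i, e (z j) (z i) :=
        Finset.sum_nonneg fun j _ => Finset.sum_nonneg fun i _ =>
          Real.rpow_nonneg dist_nonneg p
      rw [hc]; linarith
    have hle : ∀ x ∈ s, ∀ y ∈ s, e x y ≤ c := by
      intro x hx y hy
      obtain ⟨j, -, rfl⟩ := Finset.mem_image.mp hx
      obtain ⟨i, -, rfl⟩ := Finset.mem_image.mp hy
      have h1 : e (z j) (z i) ≤ ∑ i', e (z j) (z i') :=
        Finset.single_le_sum (fun i' _ => Real.rpow_nonneg dist_nonneg p) (Finset.mem_univ i)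
      have h2 : (∑ i', e (z j) (z i')) ≤ ∑ j', ∑ i', e (z j') (z i') :=
        Finset.single_le_sum (f := fun j' => ∑ i', e (z j') (z i'))
          (fun j' _ => Finset.sum_nonneg fun i' _ =>
          Real.rpow_nonneg dist_nonneg p) (Finset.mem_univ j)
      rw [hc]; linarith
    have hkey := ultra_pd e hsymm hself hpos hultra s.card s le_rfl c hcpos hle ζ'
      ⟨z k₀, Finset.mem_image_of_mem z (Finset.mem_univ k₀), by rw [hζ'z]; exact hk₀⟩
    -- transfer sums over s to sums over Fin n
    have htrans : ∀ F : X → X → ℝ, ∑ x ∈ s, ∑ y ∈ s, F x y * (ζ' x * ζ' y)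
        = ∑ j, ∑ i, F (z j) (z i) * (ζ j * ζ i) := by
      intro F
      rw [hs, Finset.sum_image (fun a _ b _ h => hz h)]
      refine Finset.sum_congr rfl fun j _ => ?_
      rw [Finset.sum_image (fun a _ b _ h => hz h)]
      refine Finset.sum_congr rfl fun i _ => ?_
      rw [hζ'z, hζ'z]
    have hsum' : ∑ x ∈ s, ζ' x = 0 := by
      rw [hs, Finset.sum_image (fun a _ b _ h => hz h)]
      simp_rw [hζ'z]
      exact hsum
    have hexp : ∑ x ∈ s, ∑ y ∈ s, (c - e x y) * (ζ' x * ζ' y)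
        = c * (∑ x ∈ s, ζ' x) ^ 2 - ∑ j, ∑ i, e (z j) (z i) * (ζ j * ζ i) := by
      have : ∀ x y : X, (c - e x y) * (ζ' x * ζ' y)
          = c * (ζ' x * ζ' y) - e x y * (ζ' x * ζ' y) := fun x y => by ring
      simp_rw [this, Finset.sum_sub_distrib]
      rw [htrans e]
      congr 1
      rw [sq, Finset.sum_mul_sum, Finset.mul_sum]
      exact Finset.sum_congr rfl fun x _ => by rw [Finset.mul_sum]
    rw [hexp, hsum'] at hkey
    simp only [ne_eq, OfNat.ofNat_ne_zero, not_false_eq_true, zero_pow, mul_zero, zero_sub] at hkey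
    have : ∀ j i, dist (z j) (z i) ^ p = e (z j) (z i) := fun j i => rfl
    simp_rw [this]
    linarith
  constructor
  · intro n hn z hz hzB ζ hsum
    by_cases hζ : ζ = 0
    · subst hζ; simp
    · exact le_of_lt (key n hn z hz ζ hsum hζ)
  · intro n hn z hz hzB ζ hsum hζ
    exact key n hn z hz ζ hsum hζ

lemma no_isometry_of_strict {Ω : Type*} [MeasurableSpace Ω]
    (μ : Measure Ω) (p : ℝ) (hp : 0 < p) (B : Set (Ω →ₘ[μ] ℝ)) (hB : TwoValued B)
    (hBLp : ∀ f ∈ B, MemLp (⇑f) (ENNReal.ofReal p) μ)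
    (hdep : ¬ AffineIndependent ℝ ((↑) : B → (Ω →ₘ[μ] ℝ)))
    (X : Type*) [MetricSpace X]
    (hstrict : HasStrictNegativeType (fun a b : X => dist a b) p (Set.univ : Set X)) :
    ¬ ∃ φ : X → (Ω →ₘ[μ] ℝ), Set.range φ = B ∧
        ∀ a b : X, lpDist p μ (φ a) (φ b) = dist a b := by
  rintro ⟨φ, hrange, hiso⟩
  rw [affineIndependent_iff] at hdep
  push_neg at hdep
  obtain ⟨s, w, hsum, hcomb, i₀, hi₀, hwi₀⟩ := hdep
  set s' : Finset ↥B := s.filter (fun i => w i ≠ 0) with hs'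
  have hi₀' : i₀ ∈ s' := Finset.mem_filter.mpr ⟨hi₀, hwi₀⟩
  have hsum' : ∑ i ∈ s', w i = 0 := by
    rw [hs', Finset.sum_filter_ne_zero]; exact hsum
  have hcomb' : ∑ i ∈ s', w i • (i : Ω →ₘ[μ] ℝ) = 0 := by
    rw [hs', Finset.sum_filter_of_ne]
    · exact hcomb
    · intro x _ hx
      intro h0
      exact hx (by rw [h0, zero_smul])
  set n : ℕ := s'.card with hn
  have hn2 : 2 ≤ n := by
    rcases Nat.lt_or_ge n 2 with h | h
    · exfalso
      have h1 : 1 ≤ n := Finset.card_pos.mpr ⟨i₀, hi₀'⟩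
      have : n = 1 := by omega
      obtain ⟨a, ha⟩ := Finset.card_eq_one.mp this
      rw [ha] at hi₀'
      have : a = i₀ := (Finset.mem_singleton.mp hi₀').symm
      rw [ha, this, Finset.sum_singleton] at hsum'
      exact hwi₀ hsum'
    · exact h
  set g : Fin n → ↥B := fun k => ((s'.equivFin.symm k : {x // x ∈ s'}) : ↥B) with hg
  have hginj : Function.Injective g :=
    Subtype.val_injective.comp s'.equivFin.symm.injective
  -- sum transfer lemmas
  have htrR : ∀ (F : ↥B → ℝ), ∑ k, F (g k) = ∑ i ∈ s', F i := by
    intro F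
    rw [← Finset.sum_coe_sort s' F]
    exact Equiv.sum_comp s'.equivFin.symm (fun x : {x // x ∈ s'} => F ↑x)
  have htrL : ∀ (F : ↥B → (Ω →ₘ[μ] ℝ)), ∑ k, F (g k) = ∑ i ∈ s', F i := by
    intro F
    rw [← Finset.sum_coe_sort s' F]
    exact Equiv.sum_comp s'.equivFin.symm (fun x : {x // x ∈ s'} => F ↑x)
  -- choose preimages
  have hψ : ∀ f : ↥B, ∃ a : X, φ a = (f : Ω →ₘ[μ] ℝ) := by
    intro f
    have : (f : Ω →ₘ[μ] ℝ) ∈ Set.range φ := hrange.symm ▸ f.2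
    exact this
  choose ψ hψ using hψ
  set z : Fin n → X := fun k => ψ (g k) with hz
  have hzinj : Function.Injective z := by
    intro j i hji
    have h2 : (g j : Ω →ₘ[μ] ℝ) = (g i : Ω →ₘ[μ] ℝ) := by
      rw [← hψ (g j), ← hψ (g i)]
      exact congrArg φ hji
    exact hginj (Subtype.ext h2)
  set ζ : Fin n → ℝ := fun k => w (g k) with hζ
  have hζsum : ∑ k, ζ k = 0 := (htrR w).trans hsum'
  have hζne : ζ ≠ 0 := by
    intro h0
    have hk₀ : g (s'.equivFin ⟨i₀, hi₀'⟩) = i₀ := by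
      rw [hg]; simp
    have : ζ (s'.equivFin ⟨i₀, hi₀'⟩) = w i₀ := by
      show w (g (s'.equivFin ⟨i₀, hi₀'⟩)) = w i₀
      rw [hk₀]
    rw [h0] at this
    exact hwi₀ this.symm
  have hlt := hstrict.2 n hn2 z hzinj (fun k => Set.mem_univ _) ζ hζsum hζne
  -- now show the quadratic form is zero
  have hmem : ∀ k, ((g k : Ω →ₘ[μ] ℝ)) ∈ B := fun k => (g k).2
  have P : ∀ j i : Fin n,
      lpDist p μ (g j : Ω →ₘ[μ] ℝ) (g i : Ω →ₘ[μ] ℝ) ^ p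
        = ∫ ω, ((g j : Ω →ₘ[μ] ℝ) ω - (g i : Ω →ₘ[μ] ℝ) ω) ^ 2 ∂μ ∧
      Integrable (fun ω => ((g j : Ω →ₘ[μ] ℝ) ω - (g i : Ω →ₘ[μ] ℝ) ω) ^ 2) μ :=
    fun j i => lp_dist_pow hp _ _ (hBLp _ (hmem j)) (hBLp _ (hmem i))
      (hB.2 _ (hmem j)) (hB.2 _ (hmem i))
  have hdist : ∀ j i : Fin n, dist (z j) (z i)
      = lpDist p μ (g j : Ω →ₘ[μ] ℝ) (g i : Ω →ₘ[μ] ℝ) := by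
    intro j i
    rw [← hiso (z j) (z i), hz]
    simp only
    rw [hψ (g j), hψ (g i)]
  -- a.e. vanishing of the weighted sum
  have hcoe : ∀ t : Finset (Fin n),
      ⇑(∑ k ∈ t, ζ k • ((g k : Ω →ₘ[μ] ℝ)))
        =ᵐ[μ] fun ω => ∑ k ∈ t, ζ k * (g k : Ω →ₘ[μ] ℝ) ω := by
    intro t
    induction t using Finset.induction with
    | empty => simp only [Finset.sum_empty]; exact AEEqFun.coeFn_zero (β := ℝ) (μ := μ)
    | @insert a t hat ih =>
      rw [Finset.sum_insert hat]
      filter_upwards [AEEqFun.coeFn_add (ζ a • ((g a : Ω →ₘ[μ] ℝ)))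
        (∑ k ∈ t, ζ k • ((g k : Ω →ₘ[μ] ℝ))),
        AEEqFun.coeFn_smul (ζ a) ((g a : Ω →ₘ[μ] ℝ)), ih] with ω h1 h2 h3
      rw [Finset.sum_insert hat, h1]
      simp only [Pi.add_apply, h3, h2, Pi.smul_apply, smul_eq_mul]
  have hSzero : ∑ k, ζ k • ((g k : Ω →ₘ[μ] ℝ)) = 0 :=
    (htrL (fun i => w i • (i : Ω →ₘ[μ] ℝ))).trans hcomb'
  have hS : ∀ᵐ ω ∂μ, ∑ k, ζ k * (g k : Ω →ₘ[μ] ℝ) ω = 0 := by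
    have h0 : ⇑(∑ k, ζ k • ((g k : Ω →ₘ[μ] ℝ))) =ᵐ[μ] (fun _ => (0:ℝ)) := by
      rw [hSzero]
      exact AEEqFun.coeFn_zero (β := ℝ) (μ := μ)
    filter_upwards [hcoe Finset.univ, h0] with ω h1 h2
    rw [← h1]
    exact h2
  -- pointwise identity
  have ptid : ∀ a : Fin n → ℝ, (∑ k, ζ k * a k) = 0 →
      ∑ j, ∑ i, (a j - a i) ^ 2 * (ζ j * ζ i) = 0 := by
    intro a ha
    have expand : ∀ j i : Fin n, (a j - a i) ^ 2 * (ζ j * ζ i)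
        = ((a j) ^ 2 * ζ j) * ζ i + ζ j * ((a i) ^ 2 * ζ i)
          - 2 * ((ζ j * a j) * (ζ i * a i)) := by
      intro j i; ring
    simp_rw [expand, Finset.sum_sub_distrib, Finset.sum_add_distrib, ← Finset.mul_sum,
      ← Finset.sum_mul, hζsum, ha]
    ring
  have hzero : ∑ j, ∑ i, dist (z j) (z i) ^ p * (ζ j * ζ i) = 0 := by
    have hstep : ∀ j i : Fin n, dist (z j) (z i) ^ p * (ζ j * ζ i)
        = ∫ ω, ((g j : Ω →ₘ[μ] ℝ) ω - (g i : Ω →ₘ[μ] ℝ) ω) ^ 2 * (ζ j * ζ i) ∂μ := by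
      intro j i
      rw [hdist j i, (P j i).1, ← integral_mul_const]
    rw [Finset.sum_congr rfl fun j _ => Finset.sum_congr rfl fun i _ => hstep j i]
    have hint : ∀ j i : Fin n, Integrable
        (fun ω => ((g j : Ω →ₘ[μ] ℝ) ω - (g i : Ω →ₘ[μ] ℝ) ω) ^ 2 * (ζ j * ζ i)) μ :=
      fun j i => ((P j i).2).mul_const _
    rw [Finset.sum_congr rfl fun j _ =>
      (integral_finset_sum Finset.univ fun i _ => hint j i).symm]
    rw [(integral_finset_sum Finset.univ fun j _ =>
      integrable_finset_sum Finset.univ fun i _ => hint j i).symm]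
    have : ∀ᵐ ω ∂μ, ∑ j, ∑ i,
        ((g j : Ω →ₘ[μ] ℝ) ω - (g i : Ω →ₘ[μ] ℝ) ω) ^ 2 * (ζ j * ζ i) = 0 := by
      filter_upwards [hS] with ω hω
      exact ptid (fun k => (g k : Ω →ₘ[μ] ℝ) ω) hω
    rw [integral_congr_ae this, integral_zero]
  rw [hzero] at hlt
  exact lt_irrefl 0 hlt

/-- If `B ⊂ L_p(Ω, μ)` is two-valued and affinely dependent, then no
metric space of strict `p`-negative type is isometric to `B`; in particular, no
ultrametric space is isometric to `B`. -/
theorem twoValued_affineDependent_no_isometry {Ω : Type*} [MeasurableSpace Ω]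
    (μ : Measure Ω) (p : ℝ) (hp : 0 < p) (B : Set (Ω →ₘ[μ] ℝ)) (hB : TwoValued B)
    (hBLp : ∀ f ∈ B, MemLp (⇑f) (ENNReal.ofReal p) μ)
    (hdep : ¬ AffineIndependent ℝ ((↑) : B → (Ω →ₘ[μ] ℝ))) :
    (∀ (X : Type*) [MetricSpace X], Nontrivial X →
      HasStrictNegativeType (fun a b : X => dist a b) p (Set.univ : Set X) →
      ¬ ∃ φ : X → (Ω →ₘ[μ] ℝ), Set.range φ = B ∧
          ∀ a b : X, lpDist p μ (φ a) (φ b) = dist a b) ∧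
    (∀ (X : Type*) [MetricSpace X], Nontrivial X →
      (∀ a b c : X, dist a c ≤ max (dist a b) (dist b c)) →
      ¬ ∃ φ : X → (Ω →ₘ[μ] ℝ), Set.range φ = B ∧
          ∀ a b : X, lpDist p μ (φ a) (φ b) = dist a b) := by
  constructor
  · intro X _ _ hstrict
    exact no_isometry_of_strict μ p hp B hB hBLp hdep X hstrict
  · intro X _ _ hu
    exact no_isometry_of_strict μ p hp B hB hBLp hdep X (ultra_strict p hp hu)
end

section
/- Let (Ω, μ) be a measure space and let B be a finitely supported two-valued set in M(Ω, μ). Then, for any p ∈ (0, ∞), the following are equivalent: (1) B has strict p-negative type when viewed as a metric subspace of L_p(Ω, μ); (2) B is an affinely independent subset of M(Ω, μ) when M(Ω, μ) is considered as a real vector space. -/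
open MeasureTheory ENNReal Filter
open scoped Classical

namespace StrictNegAux

variable {Ω : Type*} [MeasurableSpace Ω] {μ : Measure Ω}

lemma coeFn_finset_sum {ι : Type*} (s : Finset ι) (g : ι → (Ω →ₘ[μ] ℝ)) :
    ⇑(∑ k ∈ s, g k) =ᵐ[μ] fun ω => ∑ k ∈ s, g k ω := by
  classical
  induction s using Finset.cons_induction with
  | empty => simp only [Finset.sum_empty]; exact MeasureTheory.AEEqFun.coeFn_zero (β := ℝ) (μ := μ)
  | cons a s ha ih =>
    filter_upwards [MeasureTheory.AEEqFun.coeFn_add (g a) (∑ k ∈ s, g k), ih] with ω h1 h2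
    rw [Finset.sum_cons, h1, Pi.add_apply, h2, Finset.sum_cons]

lemma aux_int {f : Ω →ₘ[μ] ℝ} (h01 : ∀ᵐ ω ∂μ, f ω ∈ ({0, 1} : Set ℝ))
    (hsupp : μ (Function.support ⇑f) < ∞) : Integrable (⇑f) μ := by
  refine ⟨f.aestronglyMeasurable, ?_⟩
  have hms : MeasurableSet (Function.support ⇑f) := by
    rw [Function.support_eq_preimage]
    exact f.measurable (measurableSet_singleton 0).compl
  have hb : ∀ᵐ ω ∂μ, (‖f ω‖₊ : ℝ≥0∞) ≤ (Function.support ⇑f).indicator (fun _ => 1) ω := by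
    filter_upwards [h01] with ω hω
    simp only [Set.mem_insert_iff, Set.mem_singleton_iff] at hω
    rcases hω with h0 | h1
    · simp [h0]
    · have hmem : ω ∈ Function.support ⇑f := by simp [Function.mem_support, h1]
      simp [Set.indicator_of_mem hmem, h1]
  rw [HasFiniteIntegral]
  calc ∫⁻ ω, (‖f ω‖₊ : ℝ≥0∞) ∂μ
      ≤ ∫⁻ ω, (Function.support ⇑f).indicator (fun _ => 1) ω ∂μ := lintegral_mono_ae hb
    _ = μ (Function.support ⇑f) := by rw [lintegral_indicator hms]; simp
    _ < ∞ := hsupp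

lemma aux_int_mul {f g : Ω →ₘ[μ] ℝ} (hf01 : ∀ᵐ ω ∂μ, f ω ∈ ({0, 1} : Set ℝ))
    (hg01 : ∀ᵐ ω ∂μ, g ω ∈ ({0, 1} : Set ℝ)) (hf : Integrable (⇑f) μ) :
    Integrable (fun ω => f ω * g ω) μ := by
  refine Integrable.mono' hf (f.aestronglyMeasurable.mul g.aestronglyMeasurable) ?_
  filter_upwards [hf01, hg01] with ω h1 h2
  simp only [Set.mem_insert_iff, Set.mem_singleton_iff] at h1 h2
  rcases h1 with h1 | h1 <;> rcases h2 with h2 | h2 <;> simp [h1, h2]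

lemma dist_pow {p : ℝ} (hp : 0 < p) {f g : Ω →ₘ[μ] ℝ}
    (hf01 : ∀ᵐ ω ∂μ, f ω ∈ ({0, 1} : Set ℝ)) (hg01 : ∀ᵐ ω ∂μ, g ω ∈ ({0, 1} : Set ℝ))
    (hff : Integrable (fun ω => f ω * f ω) μ) (hgg : Integrable (fun ω => g ω * g ω) μ)
    (hfg : Integrable (fun ω => f ω * g ω) μ) :
    lpDist p μ f g ^ p =
      (∫ ω, f ω * f ω ∂μ) + (∫ ω, g ω * g ω ∂μ) - 2 * ∫ ω, f ω * g ω ∂μ := by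
  have hq0 : (ENNReal.ofReal p) ≠ 0 := by simp [ENNReal.ofReal_eq_zero, not_le, hp]
  have hqt : (ENNReal.ofReal p) ≠ ∞ := ofReal_ne_top
  have hexp : (fun ω => (f ω - g ω) ^ 2)
      = fun ω => (f ω * f ω + g ω * g ω) - 2 * (f ω * g ω) := funext fun ω => by ring
  have hsub : Integrable (fun ω => (f ω - g ω) ^ 2) μ := by
    rw [hexp]; exact (hff.add hgg).sub (hfg.const_mul 2)
  have hnn : 0 ≤ᵐ[μ] fun ω => (f ω - g ω) ^ 2 :=
    Filter.Eventually.of_forall fun ω => sq_nonneg _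
  have h1 : ∫⁻ ω, (‖(⇑(f - g)) ω‖₊ : ℝ≥0∞) ^ p ∂μ
      = ∫⁻ ω, ENNReal.ofReal ((f ω - g ω) ^ 2) ∂μ := by
    refine lintegral_congr_ae ?_
    filter_upwards [MeasureTheory.AEEqFun.coeFn_sub f g, hf01, hg01] with ω hω h1 h2
    simp only [Set.mem_insert_iff, Set.mem_singleton_iff] at h1 h2
    rw [hω, Pi.sub_apply]
    rcases h1 with h1 | h1 <;> rcases h2 with h2 | h2 <;>
      simp [h1, h2, ENNReal.zero_rpow_of_pos hp]
  have h2 : ∫⁻ ω, ENNReal.ofReal ((f ω - g ω) ^ 2) ∂μ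
      = ENNReal.ofReal (∫ ω, (f ω - g ω) ^ 2 ∂μ) :=
    (ofReal_integral_eq_lintegral_ofReal hsub hnn).symm
  have hfin : lpDist p μ f g ^ p = ∫ ω, (f ω - g ω) ^ 2 ∂μ := by
    rw [lpDist, eLpNorm_eq_lintegral_rpow_enorm_toReal hq0 hqt]; simp only [enorm_eq_nnnorm]; rw [ENNReal.toReal_ofReal hp.le,
      h1, h2, ENNReal.toReal_rpow, ← ENNReal.rpow_mul, one_div_mul_cancel hp.ne',
      ENNReal.rpow_one, ENNReal.toReal_ofReal (integral_nonneg fun ω => sq_nonneg _)]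
  have hadd : Integrable (fun ω => f ω * f ω + g ω * g ω) μ := hff.add hgg
  have hc : Integrable (fun ω => 2 * (f ω * g ω)) μ := hfg.const_mul 2
  rw [hfin, hexp, integral_sub hadd hc, integral_add hff hgg, integral_const_mul]

lemma integral_sq_eq_zero_iff {n : ℕ} (z : Fin n → (Ω →ₘ[μ] ℝ)) (ζ : Fin n → ℝ)
    (hS2 : Integrable (fun ω => (∑ k, ζ k * z k ω) ^ 2) μ) :
    (∫ ω, (∑ k, ζ k * z k ω) ^ 2 ∂μ) = 0 ↔ ∑ k, ζ k • z k = 0 := by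
  have hcoe : ⇑(∑ k, ζ k • z k) =ᵐ[μ] fun ω => ∑ k, ζ k * z k ω := by
    refine (coeFn_finset_sum Finset.univ (fun k => ζ k • z k)).trans ?_
    have h2 : ∀ k : Fin n, ∀ᵐ ω ∂μ, (ζ k • z k) ω = ζ k * z k ω := by
      intro k
      filter_upwards [MeasureTheory.AEEqFun.coeFn_smul (ζ k) (z k)] with ω hω
      rw [hω]; simp
    filter_upwards [ae_all_iff.2 h2] with ω hω
    simp only [hω]
  rw [integral_eq_zero_iff_of_nonneg (fun ω => sq_nonneg _) hS2]
  constructor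
  · intro h
    refine MeasureTheory.AEEqFun.ext ?_
    refine hcoe.trans (.trans ?_ (MeasureTheory.AEEqFun.coeFn_zero (β := ℝ) (μ := μ)).symm)
    filter_upwards [h] with ω hω
    have : (∑ k, ζ k * z k ω) ^ 2 = 0 := hω
    simpa using pow_eq_zero_iff two_ne_zero |>.mp this
  · intro h
    have h0 : (fun ω => ∑ k, ζ k * z k ω) =ᵐ[μ] (fun _ => (0 : ℝ)) := by
      refine (hcoe.symm.trans ?_)
      rw [h]
      exact MeasureTheory.AEEqFun.coeFn_zero (β := ℝ) (μ := μ)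
    filter_upwards [h0] with ω hω
    simp [hω]

lemma key_identity {B : Set (Ω →ₘ[μ] ℝ)}
    (hB01 : ∀ f ∈ B, ∀ᵐ ω ∂μ, f ω ∈ ({0, 1} : Set ℝ))
    (hsupp : ∀ f ∈ B, μ (Function.support ⇑f) < ∞) {p : ℝ} (hp : 0 < p)
    {n : ℕ} (z : Fin n → (Ω →ₘ[μ] ℝ)) (hz : ∀ k, z k ∈ B) (ζ : Fin n → ℝ)
    (hζ : ∑ k, ζ k = 0) :
    ∑ j, ∑ i, lpDist p μ (z j) (z i) ^ p * (ζ j * ζ i)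
      = -2 * ∫ ω, (∑ k, ζ k * z k ω) ^ 2 ∂μ := by
  have hint : ∀ k, Integrable (⇑(z k)) μ :=
    fun k => aux_int (hB01 _ (hz k)) (hsupp _ (hz k))
  have hmul : ∀ j i, Integrable (fun ω => z j ω * z i ω) μ :=
    fun j i => aux_int_mul (hB01 _ (hz j)) (hB01 _ (hz i)) (hint j)
  set C : Fin n → Fin n → ℝ := fun j i => ∫ ω, z j ω * z i ω ∂μ with hC
  have hdist : ∀ j i, lpDist p μ (z j) (z i) ^ p = C j j + C i i - 2 * C j i :=
    fun j i => dist_pow hp (hB01 _ (hz j)) (hB01 _ (hz i)) (hmul j j) (hmul i i) (hmul j i)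
  have hz1 : ∑ j, ∑ i, C j j * (ζ j * ζ i) = 0 := by
    have h : ∀ j, ∑ i, C j j * (ζ j * ζ i) = (C j j * ζ j) * ∑ i, ζ i := by
      intro j
      rw [Finset.mul_sum]
      exact Finset.sum_congr rfl fun i _ => by ring
    simp [h, hζ]
  have hz2 : ∑ j, ∑ i, C i i * (ζ j * ζ i) = 0 := by
    have h : ∀ j, ∑ i, C i i * (ζ j * ζ i) = ζ j * ∑ i, C i i * ζ i := by
      intro j
      rw [Finset.mul_sum]
      exact Finset.sum_congr rfl fun i _ => by ring
    simp only [h, ← Finset.sum_mul, hζ, zero_mul]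
  have hintegral : ∫ ω, (∑ k, ζ k * z k ω) ^ 2 ∂μ = ∑ j, ∑ i, C j i * (ζ j * ζ i) := by
    have e : ∀ ω, (∑ k, ζ k * z k ω) ^ 2 = ∑ j, ∑ i, (ζ j * ζ i) * (z j ω * z i ω) := by
      intro ω
      rw [sq, Finset.sum_mul_sum]
      exact Finset.sum_congr rfl fun j _ => Finset.sum_congr rfl fun i _ => by ring
    simp_rw [e]
    rw [integral_finset_sum _ (fun j _ =>
      integrable_finset_sum _ (fun i _ => (hmul j i).const_mul _))]
    refine Finset.sum_congr rfl fun j _ => ?_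
    rw [integral_finset_sum _ (fun i _ => (hmul j i).const_mul _)]
    refine Finset.sum_congr rfl fun i _ => ?_
    rw [integral_const_mul]
    ring
  calc ∑ j, ∑ i, lpDist p μ (z j) (z i) ^ p * (ζ j * ζ i)
      = ∑ j, ∑ i, (C j j * (ζ j * ζ i) + C i i * (ζ j * ζ i) - 2 * (C j i * (ζ j * ζ i))) := by
        refine Finset.sum_congr rfl fun j _ => Finset.sum_congr rfl fun i _ => ?_
        rw [hdist j i]; ring
    _ = (∑ j, ∑ i, C j j * (ζ j * ζ i)) + (∑ j, ∑ i, C i i * (ζ j * ζ i))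
          - ∑ j, ∑ i, 2 * (C j i * (ζ j * ζ i)) := by
        simp only [Finset.sum_add_distrib, Finset.sum_sub_distrib]
    _ = -2 * ∑ j, ∑ i, C j i * (ζ j * ζ i) := by
        rw [hz1, hz2]
        simp only [← Finset.mul_sum]
        ring
    _ = -2 * ∫ ω, (∑ k, ζ k * z k ω) ^ 2 ∂μ := by rw [hintegral]

lemma integrable_S2 {B : Set (Ω →ₘ[μ] ℝ)}
    (hB01 : ∀ f ∈ B, ∀ᵐ ω ∂μ, f ω ∈ ({0, 1} : Set ℝ))
    (hsupp : ∀ f ∈ B, μ (Function.support ⇑f) < ∞)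
    {n : ℕ} (z : Fin n → (Ω →ₘ[μ] ℝ)) (hz : ∀ k, z k ∈ B) (ζ : Fin n → ℝ) :
    Integrable (fun ω => (∑ k, ζ k * z k ω) ^ 2) μ := by
  have hint : ∀ k, Integrable (⇑(z k)) μ :=
    fun k => aux_int (hB01 _ (hz k)) (hsupp _ (hz k))
  have hmul : ∀ j i, Integrable (fun ω => z j ω * z i ω) μ :=
    fun j i => aux_int_mul (hB01 _ (hz j)) (hB01 _ (hz i)) (hint j)
  have e : (fun ω => (∑ k, ζ k * z k ω) ^ 2)
      = fun ω => ∑ j, ∑ i, (ζ j * ζ i) * (z j ω * z i ω) := by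
    funext ω
    rw [sq, Finset.sum_mul_sum]
    exact Finset.sum_congr rfl fun j _ => Finset.sum_congr rfl fun i _ => by ring
  rw [e]
  exact integrable_finset_sum _ fun j _ =>
    integrable_finset_sum _ fun i _ => (hmul j i).const_mul _

end StrictNegAux

set_option maxHeartbeats 1000000 in
/-- Let `B` be a finitely supported two-valued set of (classes of)
measurable functions on `(Ω, μ)`. For any `p ∈ (0, ∞)`, `B` has strict `p`-negative type
as a metric subspace of `L_p(Ω, μ)` iff `B` is affinely independent in the real vector
space of (classes of) measurable functions. -/
theorem twoValued_strictNegativeType_iff_affineIndependent_M {Ω : Type*} [MeasurableSpace Ω]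
    (μ : Measure Ω) (B : Set (Ω →ₘ[μ] ℝ)) (hB : TwoValued B)
    (hsupp : ∀ f ∈ B, μ (Function.support ⇑f) < ∞) (p : ℝ) (hp : 0 < p) :
    HasStrictNegativeType (lpDist p μ) p B ↔
      AffineIndependent ℝ ((↑) : B → (Ω →ₘ[μ] ℝ)) := by
  
  obtain ⟨-, hB01⟩ := hB
  constructor
  · intro hsnt
    rw [affineIndependent_iff]
    intro s w hw0 hws e he
    by_contra hne
    have hcard : 2 ≤ s.card := by
      by_contra hlt
      push_neg at hlt
      have hcard1 : s.card = 1 :=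
        le_antisymm (by omega) (Finset.card_pos.2 ⟨e, he⟩)
      obtain ⟨a, ha⟩ := Finset.card_eq_one.mp hcard1
      subst ha
      rw [Finset.mem_singleton] at he
      subst he
      rw [Finset.sum_singleton] at hw0
      exact hne hw0
    set n := s.card with hn
    let eqv := s.equivFin
    let zz : Fin n → (Ω →ₘ[μ] ℝ) := fun k => ((eqv.symm k : ↥B) : Ω →ₘ[μ] ℝ)
    let ζ : Fin n → ℝ := fun k => w (eqv.symm k)
    have hzzinj : Function.Injective zz := fun a b hab =>
      eqv.symm.injective (Subtype.val_injective (Subtype.val_injective hab))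
    have hzzB : ∀ k, zz k ∈ B := fun k => ((eqv.symm k : ↥B)).2
    have hζ0 : ∑ k, ζ k = 0 := by
      rw [Equiv.sum_comp eqv.symm (fun x : ↥s => w ↑x), Finset.sum_coe_sort]
      exact hw0
    have hζne : ζ ≠ 0 := by
      intro h
      apply hne
      have := congrFun h (eqv ⟨e, he⟩)
      simpa [ζ, Equiv.symm_apply_apply] using this
    have hsum0 : ∑ k, ζ k • zz k = 0 := by
      have h1 : ∑ k : Fin n, ζ k • zz k = ∑ x : ↥s, w ↑x • ((x : ↥B) : Ω →ₘ[μ] ℝ) :=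
        Equiv.sum_comp eqv.symm (fun x : ↥s => w ↑x • ((x : ↥B) : Ω →ₘ[μ] ℝ))
      rw [h1, Finset.sum_coe_sort s (fun x : ↥B => w x • (x : Ω →ₘ[μ] ℝ))]
      exact hws
    have hlt := hsnt.2 n hcard zz hzzinj hzzB ζ hζ0 hζne
    rw [StrictNegAux.key_identity hB01 hsupp hp zz hzzB ζ hζ0] at hlt
    have h0 : ∫ ω, (∑ k, ζ k * zz k ω) ^ 2 ∂μ = 0 :=
      (StrictNegAux.integral_sq_eq_zero_iff zz ζ
        (StrictNegAux.integrable_S2 hB01 hsupp zz hzzB ζ)).mpr hsum0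
    rw [h0] at hlt
    norm_num at hlt
  · intro hai
    constructor
    · intro n hn z hzi hzB ζ hζ0
      rw [StrictNegAux.key_identity hB01 hsupp hp z hzB ζ hζ0]
      have hnn : 0 ≤ ∫ ω, (∑ k, ζ k * z k ω) ^ 2 ∂μ :=
        integral_nonneg fun ω => sq_nonneg _
      linarith
    · intro n hn z hzi hzB ζ hζ0 hζne
      rw [StrictNegAux.key_identity hB01 hsupp hp z hzB ζ hζ0]
      have hnn : 0 ≤ ∫ ω, (∑ k, ζ k * z k ω) ^ 2 ∂μ :=
        integral_nonneg fun ω => sq_nonneg _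
      have hpos : 0 < ∫ ω, (∑ k, ζ k * z k ω) ^ 2 ∂μ := by
        refine lt_of_le_of_ne hnn fun h => ?_
        have hz0 : ∑ k, ζ k • z k = 0 :=
          (StrictNegAux.integral_sq_eq_zero_iff z ζ
            (StrictNegAux.integrable_S2 hB01 hsupp z hzB ζ)).mp h.symm
        have hemb : Function.Injective (fun k : Fin n => (⟨z k, hzB k⟩ : ↥B)) :=
          fun a b hab => hzi (congrArg Subtype.val hab)
        have hcomp := hai.comp_embedding
          (⟨fun k => (⟨z k, hzB k⟩ : ↥B), hemb⟩ : Fin n ↪ ↥B)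
        have hall := affineIndependent_iff.mp hcomp Finset.univ ζ hζ0
          (by simpa [Function.comp] using hz0)
        exact hζne (funext fun k => hall k (Finset.mem_univ k))
      linarith
end

section
/- Let p ∈ (0, ∞), let β ≠ 0 be a scalar, and let (Ω, μ) be a measure space. If D = [x_j(m_j); y_i(n_i)]_{s,t} is a signed simplex in L_p(Ω, μ) such that the essential range of each of the functions x_j, y_i is a subset of {0, β}, then γ_p(D) = |β|^{p−2} · ‖Σ_j m_j x_j − Σ_i n_i y_i‖_2², where ‖·‖_2 denotes the L_2(Ω, μ)-norm. In particular, γ_p(D) = 0 if and only if D is balanced. -/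
open MeasureTheory ENNReal Filter
open scoped Classical

section AuxAlg

lemma myExpandSum {ι κ : Type*} [Fintype ι] [Fintype κ] (m : ι → ℝ) (n : κ → ℝ)
    (a : ι → ℝ) (b : κ → ℝ) :
    ∑ j, ∑ i, m j * n i * (a j - b i) ^ 2
      = (∑ j, m j * a j ^ 2) * (∑ i, n i) - 2 * ((∑ j, m j * a j) * (∑ i, n i * b i))
        + (∑ j, m j) * (∑ i, n i * b i ^ 2) := by
  rw [Finset.sum_mul_sum, Finset.sum_mul_sum, Finset.sum_mul_sum, Finset.mul_sum,
    ← Finset.sum_sub_distrib, ← Finset.sum_add_distrib]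
  refine Finset.sum_congr rfl fun j _ => ?_
  rw [Finset.mul_sum, ← Finset.sum_sub_distrib, ← Finset.sum_add_distrib]
  refine Finset.sum_congr rfl fun i _ => ?_
  ring

lemma mySumTriangle {s : ℕ} (F : Fin s → Fin s → ℝ) (hsymm : ∀ j i, F j i = F i j)
    (hdiag : ∀ j, F j j = 0) :
    2 * (∑ j₁, ∑ j₂, if j₁ < j₂ then F j₁ j₂ else 0) = ∑ j₁, ∑ j₂, F j₁ j₂ := by
  have key : ∀ j i : Fin s, F j i =
      (if j < i then F j i else 0) + (if i < j then F j i else 0)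
        + (if j = i then F j i else 0) := by
    intro j i
    rcases lt_trichotomy j i with h | h | h
    · simp [h, h.ne, not_lt.mpr h.le]
    · simp [h, lt_irrefl]
    · simp [h, h.ne', not_lt.mpr h.le]
  conv_rhs => rw [show (∑ j₁, ∑ j₂, F j₁ j₂) = ∑ j₁, ∑ j₂,
      ((if j₁ < j₂ then F j₁ j₂ else 0) + (if j₂ < j₁ then F j₁ j₂ else 0)
        + (if j₁ = j₂ then F j₁ j₂ else 0)) from
    Finset.sum_congr rfl fun j _ => Finset.sum_congr rfl fun i _ => key j i]
  simp only [Finset.sum_add_distrib]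
  have h2 : (∑ j₁, ∑ j₂, if j₂ < j₁ then F j₁ j₂ else 0)
      = ∑ j₁, ∑ j₂, if j₁ < j₂ then F j₁ j₂ else 0 := by
    rw [Finset.sum_comm]
    exact Finset.sum_congr rfl fun j _ => Finset.sum_congr rfl fun i _ => by
      rw [hsymm]
  have h3 : (∑ j₁ : Fin s, ∑ j₂ : Fin s, if j₁ = j₂ then F j₁ j₂ else 0) = 0 := by
    simp [Finset.sum_ite_eq, hdiag]
  rw [h2, h3]
  ring

lemma myKeyAlg {s t : ℕ} (m : Fin s → ℝ) (n : Fin t → ℝ) (hmn : ∑ j, m j = ∑ i, n i)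
    (a : Fin s → ℝ) (b : Fin t → ℝ) :
    (∑ j, ∑ i, m j * n i * (a j - b i) ^ 2)
      - (∑ j₁, ∑ j₂, if j₁ < j₂ then m j₁ * m j₂ * (a j₁ - a j₂) ^ 2 else 0)
      - (∑ i₁, ∑ i₂, if i₁ < i₂ then n i₁ * n i₂ * (b i₁ - b i₂) ^ 2 else 0)
    = (∑ j, m j * a j - ∑ i, n i * b i) ^ 2 := by
  have eE := myExpandSum m n a b
  have eX := mySumTriangle (fun j₁ j₂ => m j₁ * m j₂ * (a j₁ - a j₂) ^ 2)
    (fun j i => by ring) (fun j => by ring)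
  have eY := mySumTriangle (fun i₁ i₂ => n i₁ * n i₂ * (b i₁ - b i₂) ^ 2)
    (fun j i => by ring) (fun j => by ring)
  have eX2 := myExpandSum m m a a
  have eY2 := myExpandSum n n b b
  rw [eX2] at eX
  rw [eY2] at eY
  linear_combination eE - eX/2 - eY/2 + (∑ i, n i * b i ^ 2 - ∑ j, m j * a j ^ 2) * hmn

end AuxAlg

section AuxMeas

variable {Ω : Type*} [MeasurableSpace Ω] {μ : Measure Ω}

lemma myLrel (q r : ℝ) (hq : 0 < q) (hr : 0 < r) (β : ℝ) (hβ : β ≠ 0) (h : Ω → ℝ)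
    (hh : ∀ᵐ ω ∂μ, |h ω| = 0 ∨ |h ω| = |β|) :
    ∫⁻ ω, (‖h ω‖₊ : ℝ≥0∞) ^ q ∂μ
      = ENNReal.ofReal (|β| ^ (q - r)) * ∫⁻ ω, (‖h ω‖₊ : ℝ≥0∞) ^ r ∂μ := by
  rw [← MeasureTheory.lintegral_const_mul' _ _ ENNReal.ofReal_ne_top]
  refine lintegral_congr_ae ?_
  filter_upwards [hh] with ω hω
  have hb : (0:ℝ) < |β| := abs_pos.mpr hβ
  have hcoe : ∀ x : ℝ, (‖x‖₊ : ℝ≥0∞) = ENNReal.ofReal |x| := by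
    intro x; simp [← Real.norm_eq_abs, enorm_eq_nnnorm]
  rcases hω with h0 | h0
  · rw [hcoe, h0]
    simp [ENNReal.zero_rpow_of_pos hq, ENNReal.zero_rpow_of_pos hr]
  · rw [hcoe, h0, ENNReal.ofReal_rpow_of_nonneg hb.le hq.le,
      ENNReal.ofReal_rpow_of_nonneg hb.le hr.le,
      ← ENNReal.ofReal_mul (by positivity), ← Real.rpow_add hb]
    ring_nf

lemma myLintLtTop (q : ℝ) (hq : 0 < q) (h : Ω → ℝ) (hLp : MemLp h (ENNReal.ofReal q) μ) :
    ∫⁻ ω, (‖h ω‖₊ : ℝ≥0∞) ^ q ∂μ < ∞ := by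
  have h0 : ENNReal.ofReal q ≠ 0 := by simp [hq, hq.le]
  have := hLp.2
  rw [eLpNorm_eq_lintegral_rpow_enorm_toReal h0 ENNReal.ofReal_ne_top] at this
  simp only [enorm_eq_nnnorm] at this
  rw [ENNReal.toReal_ofReal hq.le] at this
  rwa [ENNReal.rpow_lt_top_iff_of_pos (by positivity)] at this

lemma myIntSqEq (h : Ω → ℝ) (hm : AEStronglyMeasurable h μ) :
    ∫ ω, (h ω) ^ 2 ∂μ = (∫⁻ ω, (‖h ω‖₊ : ℝ≥0∞) ^ (2:ℝ) ∂μ).toReal := by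
  rw [MeasureTheory.integral_eq_lintegral_of_nonneg_ae
      (Filter.Eventually.of_forall fun ω => sq_nonneg _)
      ((hm.aemeasurable.pow_const 2).aestronglyMeasurable)]
  congr 1
  refine lintegral_congr fun ω => ?_
  rw [show (‖h ω‖₊ : ℝ≥0∞) = ENNReal.ofReal |h ω| by
    simp [← Real.norm_eq_abs, enorm_eq_nnnorm]]
  rw [ENNReal.ofReal_rpow_of_nonneg (abs_nonneg _) (by norm_num)]
  congr 1
  rw [show ((2:ℝ)) = ((2:ℕ):ℝ) by norm_num, Real.rpow_natCast, sq_abs]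

lemma myMemL2 (p : ℝ) (hp : 0 < p) (β : ℝ) (hβ : β ≠ 0) (h : Ω → ℝ)
    (hLp : MemLp h (ENNReal.ofReal p) μ)
    (habs : ∀ᵐ ω ∂μ, |h ω| = 0 ∨ |h ω| = |β|) : MemLp h 2 μ := by
  refine ⟨hLp.1, ?_⟩
  rw [eLpNorm_eq_lintegral_rpow_enorm_toReal two_ne_zero ENNReal.ofNat_ne_top]
  simp only [enorm_eq_nnnorm]
  rw [ENNReal.rpow_lt_top_iff_of_pos (by norm_num)]
  have : (2:ℝ≥0∞).toReal = (2:ℝ) := by norm_num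
  rw [this, myLrel 2 p (by norm_num) hp β hβ h habs]
  exact ENNReal.mul_lt_top ENNReal.ofReal_lt_top (myLintLtTop p hp h hLp)

lemma myNorm2Sq (h : Ω → ℝ) (hm : AEStronglyMeasurable h μ) :
    (eLpNorm h 2 μ).toReal ^ 2 = (∫⁻ ω, (‖h ω‖₊ : ℝ≥0∞) ^ (2:ℝ) ∂μ).toReal := by
  rw [eLpNorm_eq_lintegral_rpow_enorm_toReal two_ne_zero ENNReal.ofNat_ne_top]
  simp only [enorm_eq_nnnorm]
  have : (2:ℝ≥0∞).toReal = (2:ℝ) := by norm_num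
  rw [this, ← ENNReal.toReal_rpow, ← Real.rpow_natCast _ 2,
    ← Real.rpow_mul ENNReal.toReal_nonneg]
  norm_num

lemma myDistPow (p : ℝ) (hp : 0 < p) (β : ℝ) (hβ : β ≠ 0) (h : Ω → ℝ)
    (hm : AEStronglyMeasurable h μ)
    (habs : ∀ᵐ ω ∂μ, |h ω| = 0 ∨ |h ω| = |β|)
    (hLp : MemLp h (ENNReal.ofReal p) μ) :
    (eLpNorm h (ENNReal.ofReal p) μ).toReal ^ p
      = |β| ^ (p - 2) * ∫ ω, (h ω) ^ 2 ∂μ := by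
  have h0 : ENNReal.ofReal p ≠ 0 := by simp [hp, hp.le]
  rw [eLpNorm_eq_lintegral_rpow_enorm_toReal h0 ENNReal.ofReal_ne_top]
  simp only [enorm_eq_nnnorm]
  rw [ENNReal.toReal_ofReal hp.le, ← ENNReal.toReal_rpow,
    ← Real.rpow_mul ENNReal.toReal_nonneg, one_div, inv_mul_cancel₀ hp.ne',
    Real.rpow_one, myLrel p 2 hp (by norm_num) β hβ h habs, ENNReal.toReal_mul,
    ENNReal.toReal_ofReal (by positivity), myIntSqEq h hm]

lemma myCoeFnSum {ι : Type*} (sι : Finset ι) (f : ι → (Ω →ₘ[μ] ℝ)) :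
    ⇑(∑ i ∈ sι, f i) =ᵐ[μ] fun ω => ∑ i ∈ sι, (f i : Ω → ℝ) ω := by
  classical
  induction sι using Finset.cons_induction with
  | empty => simpa [Pi.zero_def] using (MeasureTheory.AEEqFun.coeFn_zero (β := ℝ) (μ := μ))
  | cons a sι ha ih =>
    simp only [Finset.sum_cons]
    filter_upwards [MeasureTheory.AEEqFun.coeFn_add (f a) (∑ i ∈ sι, f i), ih] with ω h1 h2
    simp [h1, h2]

end AuxMeas

section Keys
variable {Ω : Type*} [MeasurableSpace Ω] {μ : Measure Ω}
variable {Ω : Type*} [MeasurableSpace Ω] {μ : Measure Ω}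

lemma myKey1 {s t : ℕ} (w : Fin s → ℝ) (v : Fin t → ℝ) (g : Fin s → Fin t → Ω → ℝ)
    (hg : ∀ j i, Integrable (g j i) μ) :
    ∑ j, ∑ i, w j * v i * ∫ ω, g j i ω ∂μ = ∫ ω, ∑ j, ∑ i, w j * v i * g j i ω ∂μ := by
  rw [MeasureTheory.integral_finset_sum _ (fun j _ =>
    integrable_finset_sum _ (fun i _ => ((hg j i).const_mul _)))]
  refine Finset.sum_congr rfl fun j _ => ?_
  rw [MeasureTheory.integral_finset_sum _ (fun i _ => (hg j i).const_mul _)]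
  exact Finset.sum_congr rfl fun i _ => (MeasureTheory.integral_const_mul _ _).symm

lemma myKey2 {s : ℕ} (w : Fin s → ℝ) (g : Fin s → Fin s → Ω → ℝ)
    (hg : ∀ j i, Integrable (g j i) μ) :
    ∑ j₁, ∑ j₂, (if j₁ < j₂ then w j₁ * w j₂ * ∫ ω, g j₁ j₂ ω ∂μ else 0)
      = ∫ ω, ∑ j₁, ∑ j₂, (if j₁ < j₂ then w j₁ * w j₂ * g j₁ j₂ ω else 0) ∂μ := by
  have hint : ∀ j₁ j₂ : Fin s,
      Integrable (fun ω => if j₁ < j₂ then w j₁ * w j₂ * g j₁ j₂ ω else 0) μ := by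
    intro j₁ j₂
    by_cases h : j₁ < j₂
    · simpa [h] using (hg j₁ j₂).const_mul (w j₁ * w j₂)
    · simpa [h] using (integrable_zero Ω ℝ μ)
  rw [MeasureTheory.integral_finset_sum _ (fun j₁ _ =>
    integrable_finset_sum _ (fun j₂ _ => hint j₁ j₂))]
  refine Finset.sum_congr rfl fun j₁ _ => ?_
  rw [MeasureTheory.integral_finset_sum _ (fun j₂ _ => hint j₁ j₂)]
  refine Finset.sum_congr rfl fun j₂ _ => ?_
  by_cases h : j₁ < j₂
  · simp only [h, if_true]; exact (MeasureTheory.integral_const_mul _ _).symm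
  · simp [h]
end Keys

/-- If `β ≠ 0` and `D = [x_j(m_j); y_i(n_i)]_{s,t}` is a signed simplex
in `L_p(Ω, μ)` whose vertices all have essential range contained in `{0, β}`, then
`γ_p(D) = |β|^{p−2} ⬝ ‖∑_j m_j x_j − ∑_i n_i y_i‖₂²`; in particular `γ_p(D) = 0` iff `D`
is balanced. -/
theorem twoValued_simplexGap_Lp_scaled {Ω : Type*} [MeasurableSpace Ω] (μ : Measure Ω)
    (p : ℝ) (hp : 0 < p) (β : ℝ) (hβ : β ≠ 0) (s t : ℕ) (hs : 0 < s) (ht : 0 < t)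
    (x : Fin s → (Ω →ₘ[μ] ℝ)) (y : Fin t → (Ω →ₘ[μ] ℝ))
    (m : Fin s → ℝ) (n : Fin t → ℝ) (hbal : ∑ j, m j = ∑ i, n i)
    (hxLp : ∀ j, MemLp (⇑(x j)) (ENNReal.ofReal p) μ)
    (hyLp : ∀ i, MemLp (⇑(y i)) (ENNReal.ofReal p) μ)
    (hx : ∀ j, ∀ᵐ ω ∂μ, (x j : Ω → ℝ) ω ∈ ({0, β} : Set ℝ))
    (hy : ∀ i, ∀ᵐ ω ∂μ, (y i : Ω → ℝ) ω ∈ ({0, β} : Set ℝ)) :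
    simplexGap (lpDist p μ) p x y m n =
      |β| ^ (p - 2) * (eLpNorm (⇑((∑ j, m j • x j) - ∑ i, n i • y i)) 2 μ).toReal ^ 2 ∧
    (simplexGap (lpDist p μ) p x y m n = 0 ↔ (∑ j, m j • x j) = ∑ i, n i • y i) := by
  have hb : (0:ℝ) < |β| := abs_pos.mpr hβ
  set c : ℝ := |β| ^ (p - 2) with hc_def
  have hc : 0 < c := Real.rpow_pos_of_pos hb _
  set X : Fin s → Ω → ℝ := fun j => ⇑(x j) with hXdef
  set Y : Fin t → Ω → ℝ := fun i => ⇑(y i) with hYdef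
  set G : Ω → ℝ := fun ω => (∑ j, m j * X j ω) - ∑ i, n i * Y i ω with hGdef
  -- absolute-value facts
  have habs1 : ∀ (f : Ω →ₘ[μ] ℝ), (∀ᵐ ω ∂μ, (f : Ω → ℝ) ω ∈ ({0, β} : Set ℝ)) →
      ∀ᵐ ω ∂μ, |(f : Ω → ℝ) ω| = 0 ∨ |(f : Ω → ℝ) ω| = |β| := by
    intro f hf
    filter_upwards [hf] with ω h1
    simp only [Set.mem_insert_iff, Set.mem_singleton_iff] at h1
    rcases h1 with h1 | h1 <;> simp [h1]
  -- the distance formula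
  have hd : ∀ (f g : Ω →ₘ[μ] ℝ), MemLp ⇑f (ENNReal.ofReal p) μ →
      MemLp ⇑g (ENNReal.ofReal p) μ →
      (∀ᵐ ω ∂μ, (f : Ω → ℝ) ω ∈ ({0, β} : Set ℝ)) →
      (∀ᵐ ω ∂μ, (g : Ω → ℝ) ω ∈ ({0, β} : Set ℝ)) →
      lpDist p μ f g ^ p = c * ∫ ω, ((f : Ω → ℝ) ω - (g : Ω → ℝ) ω) ^ 2 ∂μ := by
    intro f g hfp hgp hf hg
    have habs : ∀ᵐ ω ∂μ, |(f : Ω → ℝ) ω - (g : Ω → ℝ) ω| = 0 ∨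
        |(f : Ω → ℝ) ω - (g : Ω → ℝ) ω| = |β| := by
      filter_upwards [hf, hg] with ω h1 h2
      simp only [Set.mem_insert_iff, Set.mem_singleton_iff] at h1 h2
      rcases h1 with h1 | h1 <;> rcases h2 with h2 | h2 <;>
        simp [h1, h2, zero_sub, abs_neg]
    have hsub : MemLp (⇑f - ⇑g) (ENNReal.ofReal p) μ := hfp.sub hgp
    have key := myDistPow p hp β hβ (⇑f - ⇑g) hsub.1
      (by simpa [Pi.sub_apply] using habs) hsub
    unfold lpDist
    rw [eLpNorm_congr_ae (MeasureTheory.AEEqFun.coeFn_sub f g), key, hc_def]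
    simp only [Pi.sub_apply]
  -- L² membership
  have hL2x : ∀ j, MemLp (X j) 2 μ :=
    fun j => myMemL2 p hp β hβ _ (hxLp j) (habs1 _ (hx j))
  have hL2y : ∀ i, MemLp (Y i) 2 μ :=
    fun i => myMemL2 p hp β hβ _ (hyLp i) (habs1 _ (hy i))
  have hInt : ∀ (f g : Ω → ℝ), MemLp f 2 μ → MemLp g 2 μ →
      Integrable (fun ω => (f ω - g ω) ^ 2) μ := by
    intro f g hf hg
    simpa [Pi.sub_apply] using (hf.sub hg).integrable_sq
  -- step 1: gap as combination of integrals
  have e1 : (∑ j, ∑ i, m j * n i * lpDist p μ (x j) (y i) ^ p)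
      = c * ∑ j, ∑ i, m j * n i * ∫ ω, (X j ω - Y i ω) ^ 2 ∂μ := by
    rw [Finset.mul_sum]
    refine Finset.sum_congr rfl fun j _ => ?_
    rw [Finset.mul_sum]
    refine Finset.sum_congr rfl fun i _ => ?_
    rw [hd (x j) (y i) (hxLp j) (hyLp i) (hx j) (hy i)]
    ring
  have e2 : (∑ j₁, ∑ j₂, if j₁ < j₂ then m j₁ * m j₂ * lpDist p μ (x j₁) (x j₂) ^ p else 0)
      = c * ∑ j₁, ∑ j₂, if j₁ < j₂ then m j₁ * m j₂ * ∫ ω, (X j₁ ω - X j₂ ω) ^ 2 ∂μ else 0 := by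
    rw [Finset.mul_sum]
    refine Finset.sum_congr rfl fun j₁ _ => ?_
    rw [Finset.mul_sum]
    refine Finset.sum_congr rfl fun j₂ _ => ?_
    by_cases h : j₁ < j₂
    · simp only [h, if_true]
      rw [hd _ _ (hxLp j₁) (hxLp j₂) (hx j₁) (hx j₂)]
      ring
    · simp [h]
  have e3 : (∑ i₁, ∑ i₂, if i₁ < i₂ then n i₁ * n i₂ * lpDist p μ (y i₁) (y i₂) ^ p else 0)
      = c * ∑ i₁, ∑ i₂, if i₁ < i₂ then n i₁ * n i₂ * ∫ ω, (Y i₁ ω - Y i₂ ω) ^ 2 ∂μ else 0 := by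
    rw [Finset.mul_sum]
    refine Finset.sum_congr rfl fun i₁ _ => ?_
    rw [Finset.mul_sum]
    refine Finset.sum_congr rfl fun i₂ _ => ?_
    by_cases h : i₁ < i₂
    · simp only [h, if_true]
      rw [hd _ _ (hyLp i₁) (hyLp i₂) (hy i₁) (hy i₂)]
      ring
    · simp [h]
  -- step 2: combination of integrals = ∫ G²
  have intS1 : Integrable (fun ω => ∑ j, ∑ i, m j * n i * (X j ω - Y i ω) ^ 2) μ :=
    integrable_finset_sum _ (fun j _ => integrable_finset_sum _
      (fun i _ => (hInt _ _ (hL2x j) (hL2y i)).const_mul _))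
  have hintIte : ∀ {u : ℕ} (Z : Fin u → Ω → ℝ) (w : Fin u → ℝ),
      (∀ k, MemLp (Z k) 2 μ) → ∀ j₁ j₂ : Fin u,
      Integrable (fun ω => if j₁ < j₂ then w j₁ * w j₂ * (Z j₁ ω - Z j₂ ω) ^ 2 else 0) μ := by
    intro u Z w hZ j₁ j₂
    by_cases h : j₁ < j₂
    · simpa [h] using (hInt _ _ (hZ j₁) (hZ j₂)).const_mul (w j₁ * w j₂)
    · simpa [h] using (integrable_zero Ω ℝ μ)
  have intS2 : Integrable
      (fun ω => ∑ j₁, ∑ j₂, if j₁ < j₂ then m j₁ * m j₂ * (X j₁ ω - X j₂ ω) ^ 2 else 0) μ :=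
    integrable_finset_sum _ (fun j₁ _ => integrable_finset_sum _
      (fun j₂ _ => hintIte X m hL2x j₁ j₂))
  have intS3 : Integrable
      (fun ω => ∑ i₁, ∑ i₂, if i₁ < i₂ then n i₁ * n i₂ * (Y i₁ ω - Y i₂ ω) ^ 2 else 0) μ :=
    integrable_finset_sum _ (fun i₁ _ => integrable_finset_sum _
      (fun i₂ _ => hintIte Y n hL2y i₁ i₂))
  have intS12 : Integrable (fun ω =>
      (∑ j, ∑ i, m j * n i * (X j ω - Y i ω) ^ 2)
      - ∑ j₁, ∑ j₂, if j₁ < j₂ then m j₁ * m j₂ * (X j₁ ω - X j₂ ω) ^ 2 else 0) μ :=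
    intS1.sub intS2
  have hbracket : (∑ j, ∑ i, m j * n i * ∫ ω, (X j ω - Y i ω) ^ 2 ∂μ)
      - (∑ j₁, ∑ j₂, if j₁ < j₂ then m j₁ * m j₂ * ∫ ω, (X j₁ ω - X j₂ ω) ^ 2 ∂μ else 0)
      - (∑ i₁, ∑ i₂, if i₁ < i₂ then n i₁ * n i₂ * ∫ ω, (Y i₁ ω - Y i₂ ω) ^ 2 ∂μ else 0)
      = ∫ ω, G ω ^ 2 ∂μ := by
    rw [myKey1 m n (fun j i ω => (X j ω - Y i ω) ^ 2)
        (fun j i => hInt _ _ (hL2x j) (hL2y i)),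
      myKey2 m (fun j₁ j₂ ω => (X j₁ ω - X j₂ ω) ^ 2)
        (fun j₁ j₂ => hInt _ _ (hL2x j₁) (hL2x j₂)),
      myKey2 n (fun i₁ i₂ ω => (Y i₁ ω - Y i₂ ω) ^ 2)
        (fun i₁ i₂ => hInt _ _ (hL2y i₁) (hL2y i₂)),
      ← MeasureTheory.integral_sub intS1 intS2,
      ← MeasureTheory.integral_sub intS12 intS3]
    refine integral_congr_ae (Filter.Eventually.of_forall fun ω => ?_)
    exact myKeyAlg m n hbal (fun j => X j ω) (fun i => Y i ω)
  have hmain : simplexGap (lpDist p μ) p x y m n = c * ∫ ω, G ω ^ 2 ∂μ := by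
    unfold simplexGap
    rw [e1, e2, e3, ← mul_sub, ← mul_sub, hbracket]
  -- relating G with the AEEqFun difference
  set Fm : Ω →ₘ[μ] ℝ := (∑ j, m j • x j) - ∑ i, n i • y i with hFmdef
  have hFm : ⇑Fm =ᵐ[μ] G := by
    have hsum1 : ⇑(∑ j, m j • x j) =ᵐ[μ] fun ω => ∑ j, m j * X j ω := by
      refine (myCoeFnSum _ _).trans ?_
      have hall : ∀ᵐ ω ∂μ, ∀ j, ((m j • x j : Ω →ₘ[μ] ℝ) : Ω → ℝ) ω = m j * X j ω := by
        rw [MeasureTheory.ae_all_iff]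
        intro j
        filter_upwards [MeasureTheory.AEEqFun.coeFn_smul (m j) (x j)] with ω h
        simp [h, hXdef]
      filter_upwards [hall] with ω h
      exact Finset.sum_congr rfl fun j _ => h j
    have hsum2 : ⇑(∑ i, n i • y i) =ᵐ[μ] fun ω => ∑ i, n i * Y i ω := by
      refine (myCoeFnSum _ _).trans ?_
      have hall : ∀ᵐ ω ∂μ, ∀ i, ((n i • y i : Ω →ₘ[μ] ℝ) : Ω → ℝ) ω = n i * Y i ω := by
        rw [MeasureTheory.ae_all_iff]
        intro i
        filter_upwards [MeasureTheory.AEEqFun.coeFn_smul (n i) (y i)] with ω h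
        simp [h, hYdef]
      filter_upwards [hall] with ω h
      exact Finset.sum_congr rfl fun i _ => h i
    filter_upwards [MeasureTheory.AEEqFun.coeFn_sub (∑ j, m j • x j) (∑ i, n i • y i),
      hsum1, hsum2] with ω h0 h1 h2
    simp only [hFmdef]
    rw [h0]
    simp [h1, h2, hGdef]
  have hG2 : MemLp G 2 μ := by
    have hA : MemLp (fun ω => ∑ j, m j * X j ω) 2 μ :=
      memLp_finset_sum _ (fun j _ => (hL2x j).const_mul (m j))
    have hB : MemLp (fun ω => ∑ i, n i * Y i ω) 2 μ :=
      memLp_finset_sum _ (fun i _ => (hL2y i).const_mul (n i))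
    exact hA.sub hB
  have hnorm : (eLpNorm (⇑Fm) 2 μ).toReal ^ 2 = ∫ ω, G ω ^ 2 ∂μ := by
    rw [eLpNorm_congr_ae hFm, myNorm2Sq G hG2.1, ← myIntSqEq G hG2.1]
  have hIntG2 : Integrable (fun ω => G ω ^ 2) μ := hG2.integrable_sq
  constructor
  · rw [hmain, hnorm]
  · rw [hmain]
    constructor
    · intro h0
      have hI0 : ∫ ω, G ω ^ 2 ∂μ = 0 := by
        rcases mul_eq_zero.mp h0 with h | h
        · exact absurd h hc.ne'
        · exact h
      have hzero : (fun ω => G ω ^ 2) =ᵐ[μ] 0 :=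
        (integral_eq_zero_iff_of_nonneg_ae
          (Filter.Eventually.of_forall fun ω => sq_nonneg _) hIntG2).mp hI0
      have hG0 : G =ᵐ[μ] 0 := by
        filter_upwards [hzero] with ω h
        have : G ω ^ 2 = 0 := h
        simpa using sq_eq_zero_iff.mp this
      have hFm0 : Fm = 0 :=
        MeasureTheory.AEEqFun.ext
          (hFm.trans (hG0.trans (MeasureTheory.AEEqFun.coeFn_zero).symm))
      exact sub_eq_zero.mp hFm0
    · intro heq
      have hFm0 : Fm = 0 := by rw [hFmdef, heq, sub_self]
      have hG0 : G =ᵐ[μ] 0 := by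
        refine hFm.symm.trans ?_
        rw [hFm0]
        exact MeasureTheory.AEEqFun.coeFn_zero
      have : ∫ ω, G ω ^ 2 ∂μ = 0 := by
        rw [integral_congr_ae (g := fun _ => (0:ℝ)) ?_ ]
        · simp
        · filter_upwards [hG0] with ω h
          simp [h]
      rw [this, mul_zero]
end
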